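/- arXiv:1902.05907 — 9 statements merged into one kernel-verified Lean document; each statement's English description precedes it below -/
import Mathlib

section
/- For every f ∈ S(0,∞) and every u > 0, the K-functional satisfies K_u(f) = inf_{s>0} [ u·s + d_f(s) ], where d_f is the distribution function ofف f. (Here the infimum on the right is over all s > 0 of the quantity u·s + m({t ∈ (0,∞) : |f(t)| > s}).) -/
open MeasureTheory Filter Set
open scoped ENNReal NNReal

/-- Lebesgue measure on `(0, ∞)`. -/
noncomputable def mLeb : Measure ℝ := volume.restrict (Set.Ioi (0:ℝ))

/-- The distribution function `d_f(s) = m {t ∈ (0,∞) : |f t| > s}`. -/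
noncomputable def distFun (f : ℝ → ℝ) (s : ℝ) : ℝ≥0∞ := mLeb {t | s < |f t|}

/-- `f ∈ S(0,∞)`: `f` is measurable and `d_f(s) < ∞` for some `s > 0`. -/
def MemS (f : ℝ → ℝ) : Prop := Measurable f ∧ ∃ s > (0:ℝ), distFun f s < ⊤

/-- `‖g‖₀ = m (supp g)`, the `L₀`-group-norm. -/
noncomputable def norm0 (g : ℝ → ℝ) : ℝ≥0∞ := mLeb (Function.support g)

/-- `‖h‖∞`, the essential supremum norm on `(0,∞)`. -/
noncomputable def normInf (h : ℝ → ℝ) : ℝ≥0∞ := eLpNorm h ⊤ mLeb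

/-- `g ∈ L₀(0,∞)`: measurable with support of finite measure. -/
def MemL0 (g : ℝ → ℝ) : Prop := Measurable g ∧ norm0 g < ⊤

/-- `h ∈ L∞(0,∞)`: measurable and essentially bounded. -/
def MemLinf (h : ℝ → ℝ) : Prop := Measurable h ∧ normInf h < ⊤

/-- The K-functional `K_u(f) = inf {‖g‖₀ + u‖h‖∞ : f = g + h, g ∈ L₀, h ∈ L∞}`. -/
noncomputable def Kfun (u : ℝ) (f : ℝ → ℝ) : ℝ≥0∞ :=
  ⨅ (g : ℝ → ℝ) (h : ℝ → ℝ) (_ : MemL0 g) (_ : MemLinf h) (_ : f = g + h),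
    norm0 g + ENNReal.ofReal u * normInf h

/-- The decreasing rearrangement `μ(t; f) = inf {s ≥ 0 : d_f(s) ≤ t}`. -/
noncomputable def rearr (f : ℝ → ℝ) (t : ℝ) : ℝ :=
  sInf {s : ℝ | 0 ≤ s ∧ distFun f s ≤ ENNReal.ofReal t}

/-- The Δ-norm `‖f‖_S = inf_{s>0} [s + d_f(s)]`. -/
noncomputable def normS (f : ℝ → ℝ) : ℝ≥0∞ :=
  ⨅ (s : ℝ) (_ : 0 < s), ENNReal.ofReal s + distFun f s

/-- `K_u(f) = inf_{s>0} [u·s + d_f(s)]` for every `f ∈ S(0,∞)`, `u > 0`. -/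
theorem stmt1 (f : ℝ → ℝ) (hf : MemS f) (u : ℝ) (hu : 0 < u) :
    Kfun u f = ⨅ (s : ℝ) (_ : 0 < s), ENNReal.ofReal (u * s) + distFun f s := by
  obtain ⟨hmf, -⟩ := hf
  apply le_antisymm
  · refine le_iInf₂ fun s hs => ?_
    rcases eq_top_or_lt_top (distFun f s) with hds | hds
    · simp [hds]
    · set h : ℝ → ℝ := fun t => max (min (f t) s) (-s) with hhdef
      set g : ℝ → ℝ := fun t => f t - h t with hgdef
      have hmh : Measurable h := (hmf.min measurable_const).max measurable_const
      have hmg : Measurable g := hmf.sub hmh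
      have hsupp : Function.support g ⊆ {t | s < |f t|} := by
        intro t ht
        simp only [Function.mem_support, hgdef] at ht
        by_contra hc
        simp only [Set.mem_setOf_eq, not_lt] at hc
        rw [abs_le] at hc
        have hht : h t = f t := by
          simp only [hhdef]
          rw [min_eq_left hc.2, max_eq_left hc.1]
        exact ht (by rw [hht]; ring)
      have h0 : norm0 g ≤ distFun f s := measure_mono hsupp
      have hbound : ∀ t, ‖h t‖ ≤ s := by
        intro t
        rw [Real.norm_eq_abs, abs_le]
        exact ⟨le_max_right _ _, max_le (min_le_right _ _) (neg_le_self hs.le)⟩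
      have hInf : normInf h ≤ ENNReal.ofReal s := by
        have := eLpNorm_le_of_ae_bound (μ := mLeb) (p := ⊤) (Eventually.of_forall hbound)
        simpa [normInf] using this
      have hK : Kfun u f ≤ norm0 g + ENNReal.ofReal u * normInf h := by
        refine iInf_le_of_le g (iInf_le_of_le h (iInf_le_of_le ⟨hmg, lt_of_le_of_lt h0 hds⟩
          (iInf_le_of_le ⟨hmh, lt_of_le_of_lt hInf (by simp)⟩
          (iInf_le_of_le (funext fun t => by simp [hgdef]) le_rfl))))
      refine hK.trans ?_
      rw [ENNReal.ofReal_mul hu.le, add_comm]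
      gcongr
  · refine le_iInf fun g => le_iInf fun h => le_iInf fun hg => le_iInf fun hh =>
      le_iInf fun heq => ?_
    refine ENNReal.le_of_forall_pos_le_add fun ε hε _ => ?_
    set b := (normInf h).toReal with hbdef
    have hbfin : normInf h = ENNReal.ofReal b := (ENNReal.ofReal_toReal hh.2.ne).symm
    set s : ℝ := b + (ε : ℝ) / u with hsdef
    have hεu : (0:ℝ) < (ε : ℝ) / u := div_pos (by exact_mod_cast hε) hu
    have hs : 0 < s := add_pos_of_nonneg_of_pos ENNReal.toReal_nonneg hεu
    have hae : ∀ᵐ t ∂mLeb, ‖h t‖ ≤ b := by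
      filter_upwards [enorm_ae_le_eLpNormEssSup h mLeb] with t ht
      have : (‖h t‖₊ : ℝ≥0∞) ≤ normInf h := by
        unfold normInf
        rw [eLpNorm_exponent_top]
        exact ht
      have := ENNReal.toReal_mono hh.2.ne this
      rw [hbdef]
      exact_mod_cast this
    have hsub : distFun f s ≤ norm0 g := by
      refine measure_mono_ae ?_
      filter_upwards [hae] with t ht hts
      have hft : f t = g t + h t := by rw [heq]; rfl
      have : |g t| > 0 := by
        have h1 : |f t| ≤ |g t| + |h t| := by rw [hft]; exact abs_add_le _ _
        have h2 : |h t| ≤ b := by rwa [Real.norm_eq_abs] at ht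
        have h3 : b + (ε:ℝ)/u < |f t| := hts
        linarith
      exact Function.mem_support.mpr (abs_pos.mp this)
    have hterm : (⨅ (s : ℝ) (_ : 0 < s), ENNReal.ofReal (u * s) + distFun f s)
        ≤ ENNReal.ofReal (u * s) + distFun f s := iInf₂_le s hs
    refine hterm.trans ?_
    have : ENNReal.ofReal (u * s) = ENNReal.ofReal u * normInf h + ε := by
      rw [hsdef, mul_add, ENNReal.ofReal_add (by positivity) (by positivity),
        mul_div_cancel₀ _ hu.ne', hbfin, ← ENNReal.ofReal_mul hu.le,
        ENNReal.ofReal_coe_nnreal]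
    rw [this]
    calc ENNReal.ofReal u * normInf h + ↑ε + distFun f s
        ≤ ENNReal.ofReal u * normInf h + ↑ε + norm0 g := by gcongr
      _ = norm0 g + ENNReal.ofReal u * normInf h + ↑ε := by ring
end

section
/- For every f ∈ S(0,∞) and every u > 0, the K-functional satisfies K_u(f) = inf_{t>0} [ t + u·μ(t; f) ], where μ(·; f) is the decreasing rearrangement of f. -/
open MeasureTheory Filter Set
open scoped ENNReal NNReal

lemma distFun_anti (f : ℝ → ℝ) : Antitone (distFun f) := fun _ _ h =>
  measure_mono fun _ hx => lt_of_le_of_lt h hx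

lemma rearrSet_nonempty (f : ℝ → ℝ) (hf : MemS f) {t : ℝ} (ht : 0 < t) :
    ∃ s, 0 ≤ s ∧ distFun f s ≤ ENNReal.ofReal t := by
  obtain ⟨hm, s₀, hs₀, hfin⟩ := hf
  set A : ℕ → Set ℝ := fun n => {x | s₀ + n < |f x|} with hA
  have hmeas : ∀ n, NullMeasurableSet (A n) mLeb := fun n =>
    (measurableSet_lt measurable_const hm.abs).nullMeasurableSet
  have hanti : Antitone A := by
    intro m n hmn x hx
    simp only [hA, Set.mem_setOf_eq] at *
    have : (m : ℝ) ≤ n := Nat.cast_le.mpr hmn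
    linarith
  have hinter : ⋂ n, A n = (∅ : Set ℝ) := by
    ext x
    simp only [Set.mem_iInter, Set.mem_empty_iff_false, iff_false, not_forall]
    obtain ⟨n, hn⟩ := exists_nat_gt (|f x| - s₀)
    exact ⟨n, by simp only [hA, Set.mem_setOf_eq, not_lt]; linarith⟩
  have hfin0 : mLeb (A 0) ≠ ∞ := by
    refine (lt_of_le_of_lt (measure_mono ?_) hfin).ne
    intro x hx
    simp only [hA, Set.mem_setOf_eq, Nat.cast_zero, add_zero] at hx
    exact hx
  have hlim := tendsto_measure_iInter_atTop (μ := mLeb) hmeas hanti ⟨0, hfin0⟩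
  rw [hinter, measure_empty] at hlim
  have hpos : (0 : ℝ≥0∞) < ENNReal.ofReal t := ENNReal.ofReal_pos.mpr ht
  obtain ⟨n, hn⟩ := (hlim.eventually_lt_const hpos).exists
  exact ⟨s₀ + n, by positivity, hn.le⟩

lemma rearr_nonneg (f : ℝ → ℝ) (t : ℝ) : 0 ≤ rearr f t :=
  Real.sInf_nonneg fun _ hs => hs.1

lemma distFun_rearr_le (f : ℝ → ℝ) (hf : MemS f) {t : ℝ} (ht : 0 < t) :
    distFun f (rearr f t) ≤ ENNReal.ofReal t := by
  set S := {s : ℝ | 0 ≤ s ∧ distFun f s ≤ ENNReal.ofReal t} with hS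
  have hne : S.Nonempty := rearrSet_nonempty f hf ht
  have hbdd : BddBelow S := ⟨0, fun s hs => hs.1⟩
  set a := rearr f t with harr
  have hU : {x : ℝ | a < |f x|} = ⋃ n : ℕ, {x : ℝ | a + 1 / (n + 1) < |f x|} := by
    ext x
    simp only [Set.mem_setOf_eq, Set.mem_iUnion]
    constructor
    · intro hx
      obtain ⟨n, hn⟩ := exists_nat_one_div_lt (sub_pos.mpr hx)
      exact ⟨n, by linarith⟩
    · rintro ⟨n, hn⟩
      have : (0 : ℝ) < 1 / (n + 1) := by positivity
      linarith
  have key : ∀ n : ℕ, distFun f (a + 1 / (n + 1)) ≤ ENNReal.ofReal t := by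
    intro n
    have hlt : sInf S < a + 1 / (n + 1) := by
      have : (0 : ℝ) < 1 / ((n : ℝ) + 1) := by positivity
      have hSa : sInf S = a := rfl
      rw [hSa]; linarith
    obtain ⟨s, hsS, hs⟩ := (csInf_lt_iff hbdd hne).mp hlt
    exact (distFun_anti f hs.le).trans hsS.2
  have hmono : Monotone fun n : ℕ => {x : ℝ | a + 1 / (n + 1) < |f x|} := by
    intro m n hmn x hx
    simp only [Set.mem_setOf_eq] at *
    have h1 : (m : ℝ) ≤ n := Nat.cast_le.mpr hmn
    have h2 : 1 / ((n : ℝ) + 1) ≤ 1 / ((m : ℝ) + 1) := by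
      apply one_div_le_one_div_of_le <;> linarith
    linarith
  calc distFun f a = mLeb (⋃ n : ℕ, {x : ℝ | a + 1 / (n + 1) < |f x|}) := by
        rw [distFun, hU]
    _ = ⨆ n : ℕ, mLeb {x : ℝ | a + 1 / (n + 1) < |f x|} := hmono.measure_iUnion
    _ ≤ ENNReal.ofReal t := iSup_le key

/-- `K_u(f) = inf_{t>0} [t + u·μ(t; f)]` for every `f ∈ S(0,∞)`, `u > 0`. -/
theorem stmt2 (f : ℝ → ℝ) (hf : MemS f) (u : ℝ) (hu : 0 < u) :
    Kfun u f = ⨅ (t : ℝ) (_ : 0 < t), ENNReal.ofReal (t + u * rearr f t) := by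
  have hfm : Measurable f := hf.1
  apply le_antisymm
  · -- K ≤ inf
    refine le_iInf fun t => le_iInf fun ht => ?_
    set a := rearr f t with ha
    have ha0 : 0 ≤ a := rearr_nonneg f t
    set h : ℝ → ℝ := fun x => max (min (f x) a) (-a) with hh
    set g : ℝ → ℝ := fun x => f x - h x with hg
    have hhm : Measurable h := (hfm.min measurable_const).max measurable_const
    have hgm : Measurable g := hfm.sub hhm
    have hhb : ∀ x, |h x| ≤ a := by
      intro x
      rw [abs_le]
      exact ⟨le_max_right _ _, max_le (min_le_right _ _) (by linarith)⟩
    have hsupp : Function.support g ⊆ {x | a < |f x|} := by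
      intro x hx
      by_contra hc
      simp only [Set.mem_setOf_eq, not_lt] at hc
      rw [abs_le] at hc
      apply hx
      have hfx : h x = f x := by
        simp only [hh, min_eq_left hc.2, max_eq_left hc.1]
      simp [hg, hfx]
    have hn0 : norm0 g ≤ ENNReal.ofReal t :=
      le_trans (measure_mono hsupp) (distFun_rearr_le f hf ht)
    have hni : normInf h ≤ ENNReal.ofReal a := by
      rw [normInf, eLpNorm_exponent_top]
      exact eLpNormEssSup_le_of_ae_bound (ae_of_all _ fun x => by
        rw [Real.norm_eq_abs]; exact hhb x)
    have hgL0 : MemL0 g := ⟨hgm, lt_of_le_of_lt hn0 ENNReal.ofReal_lt_top⟩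
    have hhLi : MemLinf h := ⟨hhm, lt_of_le_of_lt hni ENNReal.ofReal_lt_top⟩
    have hdecomp : f = g + h := by funext x; simp [hg]
    calc Kfun u f ≤ norm0 g + ENNReal.ofReal u * normInf h :=
          iInf_le_of_le g (iInf_le_of_le h (iInf_le_of_le hgL0
            (iInf_le_of_le hhLi (iInf_le _ hdecomp))))
      _ ≤ ENNReal.ofReal t + ENNReal.ofReal u * ENNReal.ofReal a := by gcongr
      _ = ENNReal.ofReal (t + u * a) := by
          rw [← ENNReal.ofReal_mul hu.le, ← ENNReal.ofReal_add ht.le (by positivity)]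
  · -- inf ≤ K
    rw [Kfun]
    refine le_iInf fun g => le_iInf fun h => le_iInf fun hg => le_iInf fun hh =>
      le_iInf fun heq => ?_
    refine ENNReal.le_of_forall_pos_le_add fun ε hε _ => ?_
    set a := (normInf h).toReal with ha
    have ha0 : 0 ≤ a := ENNReal.toReal_nonneg
    set t := (norm0 g).toReal + (ε : ℝ) with htdef
    have ht : 0 < t := by positivity
    have hae : ∀ᵐ x ∂mLeb, |h x| ≤ a := by
      have hEq : normInf h = eLpNormEssSup h mLeb := eLpNorm_exponent_top
      filter_upwards [ae_le_eLpNormEssSup (f := h) (μ := mLeb)] with x hx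
      have hx' : (‖h x‖₊ : ℝ≥0∞) ≤ normInf h := by rw [hEq]; exact hx
      have := ENNReal.toReal_mono hh.2.ne hx'
      simpa [ha, Real.norm_eq_abs] using this
    have hnull : mLeb {x | a < |h x|} = 0 := by
      have := ae_iff.mp hae
      simpa only [not_le] using this
    have hsub : {x : ℝ | a < |f x|} ⊆ Function.support g ∪ {x | a < |h x|} := by
      intro x hx
      by_cases hgx : g x = 0
      · right
        have hfx : f x = h x := by rw [heq]; simp [hgx]
        simpa [← hfx] using hx
      · left; exact hgx
    have hda : distFun f a ≤ norm0 g := by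
      calc mLeb {x | a < |f x|} ≤ mLeb (Function.support g ∪ {x | a < |h x|}) :=
            measure_mono hsub
        _ ≤ mLeb (Function.support g) + mLeb {x | a < |h x|} := measure_union_le _ _
        _ = norm0 g := by rw [hnull, add_zero]; rfl
    have hmem : a ∈ {s : ℝ | 0 ≤ s ∧ distFun f s ≤ ENNReal.ofReal t} := by
      refine ⟨ha0, hda.trans ?_⟩
      rw [← ENNReal.ofReal_toReal hg.2.ne]
      exact ENNReal.ofReal_le_ofReal (by simp [htdef, hε.le])
    have hrle : rearr f t ≤ a := csInf_le ⟨0, fun s hs => hs.1⟩ hmem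
    have hr0 : 0 ≤ rearr f t := rearr_nonneg f t
    calc (⨅ (t : ℝ) (_ : 0 < t), ENNReal.ofReal (t + u * rearr f t))
        ≤ ENNReal.ofReal (t + u * rearr f t) := iInf₂_le t ht
      _ ≤ ENNReal.ofReal (t + u * a) := ENNReal.ofReal_le_ofReal (by nlinarith)
      _ = ENNReal.ofReal ((norm0 g).toReal) + (ε : ℝ≥0∞)
            + ENNReal.ofReal u * ENNReal.ofReal a := by
          rw [ENNReal.ofReal_add (by positivity) (by positivity),
            ENNReal.ofReal_add ENNReal.toReal_nonneg (by positivity),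
            ENNReal.ofReal_mul hu.le, ENNReal.ofReal_coe_nnreal]
      _ = norm0 g + ENNReal.ofReal u * normInf h + (ε : ℝ≥0∞) := by
          rw [ENNReal.ofReal_toReal hg.2.ne, ha, ENNReal.ofReal_toReal hh.2.ne]
          ring
end

section
/- Fix u > 0. The space S(0,∞) is complete with respect to the K-functional K_u: if (f_n) is a sequence in S(0,∞) such that K_u(f_n − f_m) → 0 as n, m → ∞, then there exists f ∈ S(0,∞) with K_u(f_n − f) → 0 as n → ∞. -/
open MeasureTheory Filter Set
open scoped ENNReal NNReal

open scoped Topology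

lemma distFun_mono {f : ℝ → ℝ} {a b : ℝ} (hab : a ≤ b) : distFun f b ≤ distFun f a :=
  measure_mono (fun t ht => lt_of_le_of_lt hab ht)

lemma distFun_add_le (f g : ℝ → ℝ) (a b : ℝ) :
    distFun (f + g) (a + b) ≤ distFun f a + distFun g b := by
  refine le_trans (measure_mono ?_) (measure_union_le _ _)
  intro t ht
  simp only [mem_setOf_eq, Pi.add_apply, mem_union] at *
  by_contra hc
  push_neg at hc
  exact absurd ((abs_add_le _ _).trans (add_le_add hc.1 hc.2)) (not_le.mpr ht)

lemma distFun_sub_comm (f g : ℝ → ℝ) (s : ℝ) : distFun (f - g) s = distFun (g - f) s := by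
  unfold distFun
  congr 1
  ext t
  simp [abs_sub_comm (f t) (g t)]

lemma Kfun_le (u : ℝ) {f : ℝ → ℝ} (hf : Measurable f) {s : ℝ} (hs : 0 ≤ s)
    (hfin : distFun f s < ⊤) :
    Kfun u f ≤ distFun f s + ENNReal.ofReal u * ENNReal.ofReal s := by
  set g : ℝ → ℝ := fun t => if s < |f t| then f t else 0 with hgdef
  set h : ℝ → ℝ := fun t => if s < |f t| then 0 else f t with hhdef
  have hmeas : MeasurableSet {t : ℝ | s < |f t|} := measurableSet_lt measurable_const hf.abs
  have hgm : Measurable g := Measurable.ite hmeas hf measurable_const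
  have hhm : Measurable h := Measurable.ite hmeas measurable_const hf
  have hg0 : norm0 g ≤ distFun f s := by
    refine measure_mono fun t ht => ?_
    by_contra hc
    exact ht (if_neg hc)
  have hhb : normInf h ≤ ENNReal.ofReal s := by
    rw [normInf, eLpNorm_exponent_top]
    refine eLpNormEssSup_le_of_ae_bound (C := s) (ae_of_all _ fun t => ?_)
    by_cases hc : s < |f t|
    · simp only [hhdef, if_pos hc, norm_zero]; exact hs
    · simpa only [hhdef, if_neg hc, Real.norm_eq_abs] using not_lt.mp hc
  have hfeq : f = g + h := by
    funext t
    by_cases hc : s < |f t| <;> simp [hgdef, hhdef, hc]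
  have h1 : Kfun u f ≤ norm0 g + ENNReal.ofReal u * normInf h := by
    refine iInf_le_of_le g (iInf_le_of_le h (iInf_le_of_le ⟨hgm, lt_of_le_of_lt hg0 hfin⟩
      (iInf_le_of_le ⟨hhm, lt_of_le_of_lt hhb ENNReal.ofReal_lt_top⟩
      (iInf_le_of_le hfeq le_rfl))))
  exact h1.trans (add_le_add hg0 (mul_le_mul_right hhb _))

lemma distFun_lt_of_Kfun_lt {u : ℝ} (hu : 0 < u) {f : ℝ → ℝ} {ε : ℝ} {δ : ℝ≥0∞}
    (hK : Kfun u f < min δ (ENNReal.ofReal u * ENNReal.ofReal ε)) :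
    distFun f ε < δ := by
  simp only [Kfun, iInf_lt_iff] at hK
  obtain ⟨g, h, hg, hh, hfe, hlt⟩ := hK
  have h1 : norm0 g < δ := lt_of_le_of_lt le_self_add (hlt.trans_le (min_le_left _ _))
  have h2 : ENNReal.ofReal u * normInf h < ENNReal.ofReal u * ENNReal.ofReal ε :=
    lt_of_le_of_lt le_add_self (hlt.trans_le (min_le_right _ _))
  have h3 : normInf h < ENNReal.ofReal ε :=
    (ENNReal.mul_lt_mul_iff_right (by simp [hu]) ENNReal.ofReal_ne_top).mp h2
  have h4 : mLeb {t | ε < |h t|} = 0 := by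
    rw [normInf, eLpNorm_exponent_top, eLpNormEssSup] at h3
    have := ae_lt_of_essSup_lt h3
    rw [ae_iff] at this
    refine measure_mono_null (fun t ht => ?_) this
    simp only [mem_setOf_eq, not_lt] at *
    calc ENNReal.ofReal ε ≤ ENNReal.ofReal |h t| := ENNReal.ofReal_le_ofReal ht.le
      _ = (‖h t‖₊ : ℝ≥0∞) := by rw [← Real.norm_eq_abs]; exact ENNReal.ofReal_eq_coe_nnreal (norm_nonneg _)
  have h5 : distFun f ε ≤ norm0 g := by
    have hsub : {t : ℝ | ε < |f t|} ⊆ Function.support g ∪ {t | ε < |h t|} := by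
      intro t ht
      by_cases hgt : g t = 0
      · right
        have : f t = g t + h t := by rw [hfe]; rfl
        simpa [this, hgt] using ht
      · exact Or.inl hgt
    calc distFun f ε ≤ mLeb (Function.support g) + mLeb {t | ε < |h t|} :=
          le_trans (measure_mono hsub) (measure_union_le _ _)
      _ = norm0 g := by rw [h4, add_zero]; rfl
  exact h5.trans_lt h1


/-- `S(0,∞)` is complete with respect to `K_u` for any fixed `u > 0`:
every Cauchy sequence has a limit in `S(0,∞)`. -/
theorem stmt5 (u : ℝ) (hu : 0 < u) (f : ℕ → ℝ → ℝ) (hf : ∀ n, MemS (f n))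
    (hcauchy : ∀ ε > (0:ℝ), ∃ N : ℕ, ∀ n ≥ N, ∀ k ≥ N,
      Kfun u (f n - f k) < ENNReal.ofReal ε) :
    ∃ g : ℝ → ℝ, MemS g ∧ Tendsto (fun n => Kfun u (f n - g)) atTop (nhds 0) := by
  classical
  -- Step 1: the sequence is Cauchy in measure
  have key : ∀ ε > (0:ℝ), ∀ δ > (0:ℝ), ∃ N, ∀ n ≥ N, ∀ k ≥ N,
      distFun (f n - f k) ε < ENNReal.ofReal δ := by
    intro ε hε δ hδ
    obtain ⟨N, hN⟩ := hcauchy (min δ (u * ε)) (lt_min hδ (by positivity))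
    refine ⟨N, fun n hn k hk => ?_⟩
    refine distFun_lt_of_Kfun_lt hu (lt_of_lt_of_le (hN n hn k hk) (le_min ?_ ?_))
    · exact ENNReal.ofReal_le_ofReal (min_le_left _ _)
    · rw [← ENNReal.ofReal_mul hu.le]
      exact ENNReal.ofReal_le_ofReal (min_le_right _ _)
  -- Step 2: choose a rapidly Cauchy subsequence
  choose Nf hNf using fun j : ℕ => key ((1/2:ℝ)^j) (by positivity) ((1/2:ℝ)^j) (by positivity)
  set ns : ℕ → ℕ := fun j => j + (Finset.range (j+1)).sup Nf with hnsdef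
  have hns_self : ∀ j, j ≤ ns j := fun j => Nat.le_add_right _ _
  have hns_geN : ∀ i j : ℕ, i ≤ j → Nf i ≤ ns j := fun i j h =>
    le_add_left (Finset.le_sup (Finset.mem_range.mpr (lt_of_le_of_lt h j.lt_succ_self)))
  set E : ℕ → Set ℝ := fun j => {t | (1/2:ℝ)^j < |f (ns (j+1)) t - f (ns j) t|} with hEdef
  have hE : ∀ j, mLeb (E j) < ENNReal.ofReal ((1/2)^j) := by
    intro j
    have := hNf j (ns (j+1)) (hns_geN j (j+1) j.le_succ) (ns j) (hns_geN j j le_rfl)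
    simpa [distFun, hEdef] using this
  have htail : ∀ j : ℕ, (∑' i : ℕ, mLeb (E (j+i))) ≤ ENNReal.ofReal (2 * (1/2)^j) := by
    intro j
    have h1 : (∑' i : ℕ, mLeb (E (j+i))) ≤ ∑' i : ℕ, ENNReal.ofReal ((1/2)^j * (1/2)^i) := by
      refine ENNReal.tsum_le_tsum fun i => ?_
      rw [← pow_add]
      exact (hE (j+i)).le
    rw [← ENNReal.ofReal_tsum_of_nonneg (fun i => by positivity)
      ((summable_geometric_of_lt_one (by norm_num) (by norm_num)).mul_left _)] at h1
    refine h1.trans (ENNReal.ofReal_le_ofReal ?_)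
    rw [tsum_mul_left, tsum_geometric_of_lt_one (by norm_num) (by norm_num)]
    norm_num [mul_comm]
  have hsum : (∑' j, mLeb (E j)) ≠ ⊤ := by
    have h0 := htail 0
    simp only [zero_add] at h0
    exact ne_top_of_le_ne_top ENNReal.ofReal_ne_top h0
  -- Step 3: a.e. convergence of the subsequence, and the limit function g
  have haeconv : ∀ᵐ t ∂mLeb, ∃ l : ℝ, Tendsto (fun j => f (ns j) t) atTop (𝓝 l) := by
    filter_upwards [MeasureTheory.ae_eventually_notMem hsum] with t ht
    obtain ⟨J, hJ⟩ := eventually_atTop.mp ht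
    have hcs : CauchySeq (fun i => f (ns (i + J)) t) := by
      refine cauchySeq_of_dist_le_of_summable (fun i => (1/2:ℝ)^(i+J)) (fun i => ?_)
        ((summable_geometric_of_lt_one (by norm_num) (by norm_num)).comp_injective
          (add_left_injective J))
      have h2 := hJ (i + J) (Nat.le_add_left _ _)
      simp only [hEdef, mem_setOf_eq, not_lt] at h2
      rw [Real.dist_eq, abs_sub_comm, show i + 1 + J = i + J + 1 by ring]
      simpa using h2
    obtain ⟨l, hl⟩ := cauchySeq_tendsto_of_complete hcs
    exact ⟨l, (tendsto_add_atTop_iff_nat J).mp hl⟩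
  obtain ⟨g, hgm, hgconv⟩ := measurable_limit_of_tendsto_metrizable_ae
    (fun j => ((hf (ns j)).1.aemeasurable)) haeconv
  -- Step 4: quantitative bound on the tail of the subsequence
  have hquant : ∀ j : ℕ, distFun (f (ns j) - g) (2 * (1/2)^j) ≤ ENNReal.ofReal (2 * (1/2)^j) := by
    intro j
    set Bad : Set ℝ := {t | ¬ Tendsto (fun j => f (ns j) t) atTop (𝓝 (g t))} with hBdef
    have hBad : mLeb Bad = 0 := hgconv
    have hsub : {t : ℝ | 2 * (1/2:ℝ)^j < |(f (ns j) - g) t|} ⊆ (⋃ i, E (j+i)) ∪ Bad := by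
      intro t ht
      by_cases hB : t ∈ Bad
      · exact Or.inr hB
      · left
        simp only [hBdef, mem_setOf_eq, not_not] at hB
        by_contra hc
        simp only [mem_iUnion, not_exists] at hc
        have hstep : ∀ i : ℕ, |f (ns (j+i+1)) t - f (ns (j+i)) t| ≤ (1/2:ℝ)^(j+i) := by
          intro i
          have := hc i
          simp only [hEdef, mem_setOf_eq, not_lt] at this
          exact this
        have hbound : ∀ i : ℕ, |f (ns j) t - f (ns (j+i)) t| ≤ 2*(1/2:ℝ)^j - 2*(1/2)^(j+i) := by
          intro i
          induction i with
          | zero => simp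
          | succ i ih =>
            have h3 : |f (ns j) t - f (ns (j+i+1)) t| ≤
                |f (ns j) t - f (ns (j+i)) t| + |f (ns (j+i+1)) t - f (ns (j+i)) t| := by
              rw [abs_sub_comm (f (ns (j+i+1)) t)]
              exact abs_sub_le _ _ _
            have h4 := hstep i
            have h5 : (2:ℝ)*(1/2)^(j+i+1) = (1/2)^(j+i) := by
              rw [pow_succ]; ring
            have := h3.trans (add_le_add ih h4)
            rw [show j + (i+1) = j + i + 1 by ring]
            linarith
        have hlim : Tendsto (fun i => |f (ns j) t - f (ns (j+i)) t|) atTop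
            (𝓝 |f (ns j) t - g t|) := by
          have h6 : Tendsto (fun i => f (ns (j+i)) t) atTop (𝓝 (g t)) := by
            have := (tendsto_add_atTop_iff_nat j).mpr hB
            refine this.congr fun i => by rw [add_comm]
          exact ((tendsto_const_nhds.sub h6).abs)
        have h7 : |f (ns j) t - g t| ≤ 2*(1/2:ℝ)^j :=
          le_of_tendsto hlim (Eventually.of_forall fun i =>
            (hbound i).trans (sub_le_self _ (by positivity)))
        simp only [mem_setOf_eq, Pi.sub_apply] at ht
        linarith
    calc distFun (f (ns j) - g) (2 * (1/2)^j)
        ≤ mLeb (⋃ i, E (j+i)) + mLeb Bad :=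
          le_trans (measure_mono hsub) (measure_union_le _ _)
      _ = mLeb (⋃ i, E (j+i)) := by rw [hBad, add_zero]
      _ ≤ ∑' i, mLeb (E (j+i)) := measure_iUnion_le _
      _ ≤ ENNReal.ofReal (2 * (1/2)^j) := htail j
  -- Step 5: the full sequence converges to g in measure
  have claim2 : ∀ a > (0:ℝ), ∀ δ > (0:ℝ), ∃ N, ∀ n ≥ N,
      distFun (f n - g) a < ENNReal.ofReal δ := by
    intro a ha δ hδ
    obtain ⟨N, hN⟩ := key (a/2) (by positivity) (δ/2) (by positivity)
    obtain ⟨j₀, hj₀⟩ := exists_pow_lt_of_lt_one (x := min (a/2) (δ/2) / 2) (by positivity)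
      (show (1/2:ℝ) < 1 by norm_num)
    set j := max j₀ N with hjdef
    have hj1 : 2 * (1/2:ℝ)^j ≤ min (a/2) (δ/2) := by
      have : (1/2:ℝ)^j ≤ (1/2)^j₀ :=
        pow_le_pow_of_le_one (by norm_num) (by norm_num) (le_max_left _ _)
      linarith [hj₀]
    have hjN : N ≤ ns j := le_trans (le_max_right _ _) (hns_self j)
    refine ⟨ns j, fun n hn => ?_⟩
    have hsplit : distFun (f n - g) a ≤
        distFun (f n - f (ns j)) (a/2) + distFun (f (ns j) - g) (a/2) := by
      have heq : f n - g = (f n - f (ns j)) + (f (ns j) - g) := by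
        funext t; simp
      calc distFun (f n - g) a = distFun ((f n - f (ns j)) + (f (ns j) - g)) (a/2 + a/2) := by
            rw [← heq, add_halves]
        _ ≤ _ := distFun_add_le _ _ _ _
    have h2 : distFun (f (ns j) - g) (a/2) ≤ ENNReal.ofReal (δ/2) := by
      refine le_trans (distFun_mono ?_) ((hquant j).trans (ENNReal.ofReal_le_ofReal ?_))
      · exact hj1.trans (min_le_left _ _)
      · exact hj1.trans (min_le_right _ _)
    have h1 : distFun (f n - f (ns j)) (a/2) < ENNReal.ofReal (δ/2) :=
      hN n (le_trans hjN hn) (ns j) hjN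
    calc distFun (f n - g) a ≤ distFun (f n - f (ns j)) (a/2) + distFun (f (ns j) - g) (a/2) :=
          hsplit
      _ < ENNReal.ofReal (δ/2) + ENNReal.ofReal (δ/2) :=
          ENNReal.add_lt_add_of_lt_of_le (ne_top_of_le_ne_top ENNReal.ofReal_ne_top h2) h1 h2
      _ = ENNReal.ofReal δ := by rw [← ENNReal.ofReal_add (by positivity) (by positivity)]; norm_num
  -- Step 6 and 7: assemble
  obtain ⟨N₁, hN₁⟩ := claim2 1 one_pos 1 one_pos
  obtain ⟨s₀, hs₀, hfin⟩ := (hf N₁).2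
  refine ⟨g, ⟨hgm, s₀ + 1, by linarith, ?_⟩, ?_⟩
  · have hle : distFun g (s₀ + 1) ≤ distFun (f N₁) s₀ + distFun (g - f N₁) 1 := by
      have hgid : g = f N₁ + (g - f N₁) := by funext t; simp
      calc distFun g (s₀+1) = distFun (f N₁ + (g - f N₁)) (s₀+1) := by rw [← hgid]
        _ ≤ _ := distFun_add_le _ _ _ _
    refine lt_of_le_of_lt hle (ENNReal.add_lt_top.mpr ⟨hfin, ?_⟩)
    rw [distFun_sub_comm]
    exact (hN₁ N₁ le_rfl).trans ENNReal.ofReal_lt_top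
  · rw [ENNReal.tendsto_nhds_zero]
    intro ε hε
    obtain ⟨r, hr0, hrε⟩ : ∃ r : ℝ, 0 < r ∧ ENNReal.ofReal r ≤ ε := by
      rcases eq_or_ne ε ⊤ with rfl | hε'
      · exact ⟨1, one_pos, le_top⟩
      · exact ⟨ε.toReal, ENNReal.toReal_pos hε.ne' hε',
          (ENNReal.ofReal_toReal hε').le⟩
    set a := r / (1 + u) with hadef
    have ha : 0 < a := by positivity
    obtain ⟨N, hN⟩ := claim2 a ha a ha
    rw [eventually_atTop]
    refine ⟨N, fun n hn => ?_⟩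
    have hmeas : Measurable (f n - g) := (hf n).1.sub hgm
    have h1 := hN n hn
    have har : a + u * a = r := by
      rw [hadef]; field_simp
    calc Kfun u (f n - g) ≤ distFun (f n - g) a + ENNReal.ofReal u * ENNReal.ofReal a :=
          Kfun_le u hmeas ha.le (h1.trans_le le_top)
      _ ≤ ENNReal.ofReal a + ENNReal.ofReal u * ENNReal.ofReal a := by
          exact add_le_add ((h1.le).trans le_rfl) le_rfl
      _ = ENNReal.ofReal (a + u * a) := by
          rw [← ENNReal.ofReal_mul hu.le, ← ENNReal.ofReal_add ha.le (by positivity)]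
      _ ≤ ε := by rw [har]; exact hrε
end

section
/- Let T be an additive map sending measurable functions on (0,∞) to measurable functions (T(f+g) = Tf + Tg), and suppose there are constants M₀, M₁ > 0 such that m(supp Tf) ≤ M₀·m(supp f) for every f ∈ L₀(0,∞) and ‖Tf‖∞ ≤ M₁‖f‖∞ for every f ∈ L∞(0,∞). Then for every f ∈ S(0,∞) and every t > 0, the decreasing rearrangements satisfy μ(M₀·t; Tf) ≤ M₁·μ(t; f). -/
open MeasureTheory Filter Set
open scoped ENNReal NNReal

lemma distFun_mono_s6 (f : ℝ → ℝ) {s s' : ℝ} (h : s ≤ s') : distFun f s' ≤ distFun f s :=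
  measure_mono fun _ hx => lt_of_le_of_lt h hx

open Topology in
lemma rearr_set_nonempty {f : ℝ → ℝ} (hf : MemS f) {t : ℝ} (ht : 0 < t) :
    ∃ s, 0 ≤ s ∧ distFun f s ≤ ENNReal.ofReal t := by
  obtain ⟨hm, s₀, hs₀, hfin⟩ := hf
  set A : ℕ → Set ℝ := fun n => {x | s₀ + n < |f x|} with hA
  have hmeasA : ∀ n, NullMeasurableSet (A n) mLeb := fun n =>
    (measurableSet_lt measurable_const hm.abs).nullMeasurableSet
  have hanti : Antitone A := by
    intro m n hmn x hx
    simp only [hA, mem_setOf_eq] at *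
    have : (m:ℝ) ≤ n := Nat.cast_le.2 hmn
    linarith
  have hint : (⋂ n, A n) = ∅ := by
    ext x
    simp only [mem_iInter, mem_empty_iff_false, iff_false, not_forall]
    obtain ⟨n, hn⟩ := exists_nat_gt (|f x| - s₀)
    exact ⟨n, by simp only [hA, mem_setOf_eq, not_lt]; linarith⟩
  have htend : Tendsto (fun n : ℕ => distFun f (s₀ + n)) atTop (𝓝 0) := by
    have h0 : mLeb (A 0) ≠ ∞ := by
      simp only [hA, Nat.cast_zero, add_zero]
      exact hfin.ne
    have := tendsto_measure_iInter_atTop hmeasA hanti ⟨0, h0⟩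
    simp only [hint, measure_empty] at this
    exact this
  have hev : ∀ᶠ n : ℕ in atTop, distFun f (s₀ + n) < ENNReal.ofReal t :=
    htend.eventually_lt_const (ENNReal.ofReal_pos.2 ht)
  obtain ⟨n, hn⟩ := hev.exists
  exact ⟨s₀ + n, by positivity, hn.le⟩

/-- If `T` is additive, maps measurable functions to measurable
functions, and satisfies `m(supp Tf) ≤ M₀·m(supp f)` on `L₀` and
`‖Tf‖∞ ≤ M₁‖f‖∞` on `L∞`, then `μ(M₀·t; Tf) ≤ M₁·μ(t; f)` for all `f ∈ S(0,∞)`, `t > 0`. -/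
theorem stmt6 (T : (ℝ → ℝ) → (ℝ → ℝ))
    (hadd : ∀ f g : ℝ → ℝ, T (f + g) = T f + T g)
    (hmeas : ∀ f : ℝ → ℝ, Measurable f → Measurable (T f))
    (M₀ M₁ : ℝ) (hM₀ : 0 < M₀) (hM₁ : 0 < M₁)
    (hT0 : ∀ f : ℝ → ℝ, MemL0 f → norm0 (T f) ≤ ENNReal.ofReal M₀ * norm0 f)
    (hTinf : ∀ f : ℝ → ℝ, MemLinf f → normInf (T f) ≤ ENNReal.ofReal M₁ * normInf f)
    (f : ℝ → ℝ) (hf : MemS f) (t : ℝ) (ht : 0 < t) :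
    rearr (T f) (M₀ * t) ≤ M₁ * rearr f t := by
  set S : Set ℝ := {s : ℝ | 0 ≤ s ∧ distFun f s ≤ ENNReal.ofReal t} with hS
  have hSne : S.Nonempty := rearr_set_nonempty hf ht
  set μ := rearr f t with hμ
  have hμS : μ = sInf S := rfl
  have hμ0 : 0 ≤ μ := by
    rw [hμS]
    exact le_csInf hSne fun s hs => hs.1
  have hkey : distFun f μ ≤ ENNReal.ofReal t := by
    have hstep : ∀ n : ℕ, distFun f (μ + 1/(n+1)) ≤ ENNReal.ofReal t := by
      intro n
      have hpos : (0:ℝ) < 1/((n:ℝ)+1) := by positivity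
      have hlt : sInf S < μ + 1/((n:ℝ)+1) := by
        rw [← hμS]; linarith
      obtain ⟨a, haS, halt⟩ := exists_lt_of_csInf_lt hSne hlt
      exact le_trans (distFun_mono_s6 f halt.le) haS.2
    have hunion : {x | μ < |f x|} = ⋃ n : ℕ, {x | μ + 1/((n:ℝ)+1) < |f x|} := by
      ext x
      simp only [mem_setOf_eq, mem_iUnion]
      constructor
      · intro hx
        obtain ⟨n, hn⟩ := exists_nat_one_div_lt (sub_pos.2 hx)
        exact ⟨n, by linarith⟩
      · rintro ⟨n, hn⟩
        have : (0:ℝ) < 1/((n:ℝ)+1) := by positivity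
        linarith
    have hmono : Monotone (fun n : ℕ => {x | μ + 1/((n:ℝ)+1) < |f x|}) := by
      intro m n hmn x hx
      simp only [mem_setOf_eq] at *
      have h1 : (m:ℝ) + 1 ≤ (n:ℝ) + 1 := by
        have : (m:ℝ) ≤ n := Nat.cast_le.2 hmn; linarith
      have h2 : (1:ℝ)/((n:ℝ)+1) ≤ 1/((m:ℝ)+1) :=
        one_div_le_one_div_of_le (by positivity) h1
      linarith
    calc distFun f μ = mLeb (⋃ n : ℕ, {x | μ + 1/((n:ℝ)+1) < |f x|}) := by
          rw [distFun, hunion]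
      _ = ⨆ n : ℕ, distFun f (μ + 1/((n:ℝ)+1)) := hmono.measure_iUnion
      _ ≤ ENNReal.ofReal t := iSup_le hstep
  -- decomposition
  set h : ℝ → ℝ := fun x => max (min (f x) μ) (-μ) with hh
  have hhmeas : Measurable h := (hf.1.min measurable_const).max measurable_const
  have hhbd : ∀ x, |h x| ≤ μ := by
    intro x
    rw [abs_le]
    exact ⟨le_max_right _ _, max_le (min_le_right _ _) (by linarith)⟩
  set g : ℝ → ℝ := fun x => f x - h x with hg
  have hfg : f = g + h := by funext x; simp [hg]
  have hsupp : Function.support g ⊆ {x | μ < |f x|} := by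
    intro x hx
    simp only [Function.mem_support, hg] at hx
    by_contra hc
    simp only [mem_setOf_eq, not_lt] at hc
    rw [abs_le] at hc
    apply hx
    have hhx : h x = f x := by
      show max (min (f x) μ) (-μ) = f x
      rw [min_eq_left hc.2, max_eq_left hc.1]
    rw [hhx]; ring
  have hg0 : norm0 g ≤ ENNReal.ofReal t := le_trans (measure_mono hsupp) hkey
  have hgL0 : MemL0 g := ⟨hf.1.sub hhmeas, lt_of_le_of_lt hg0 ENNReal.ofReal_lt_top⟩
  have hhinf : normInf h ≤ ENNReal.ofReal μ := by
    rw [normInf, eLpNorm_exponent_top]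
    exact eLpNormEssSup_le_of_ae_bound
      (Eventually.of_forall fun x => by simpa [Real.norm_eq_abs] using hhbd x)
  have hhLinf : MemLinf h := ⟨hhmeas, lt_of_le_of_lt hhinf ENNReal.ofReal_lt_top⟩
  have hTfeq : T f = T g + T h := by rw [hfg, hadd]
  have hThae : ∀ᵐ x ∂mLeb, |T h x| ≤ M₁ * μ := by
    have h1 : normInf (T h) ≤ ENNReal.ofReal (M₁ * μ) := by
      calc normInf (T h) ≤ ENNReal.ofReal M₁ * normInf h := hTinf h hhLinf
        _ ≤ ENNReal.ofReal M₁ * ENNReal.ofReal μ := by gcongr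
        _ = ENNReal.ofReal (M₁ * μ) := (ENNReal.ofReal_mul hM₁.le).symm
    rw [normInf, eLpNorm_exponent_top] at h1
    filter_upwards [enorm_ae_le_eLpNormEssSup (T h) mLeb] with x hx
    have h2 : ENNReal.ofReal ‖T h x‖ ≤ ENNReal.ofReal (M₁ * μ) := by
      rw [ofReal_norm]
      exact le_trans hx h1
    have h3 := (ENNReal.ofReal_le_ofReal_iff (by positivity)).1 h2
    simpa [Real.norm_eq_abs] using h3
  have hnull : mLeb {x | M₁ * μ < |T h x|} = 0 := by
    rw [ae_iff] at hThae
    simpa [not_le] using hThae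
  have hsub : {x | M₁*μ < |T f x|} ⊆ Function.support (T g) ∪ {x | M₁*μ < |T h x|} := by
    intro x hx
    by_cases hxg : T g x = 0
    · right
      have hTfx : T f x = T h x := by rw [hTfeq]; simp [hxg]
      simp only [mem_setOf_eq] at hx ⊢
      rwa [hTfx] at hx
    · exact Or.inl hxg
  have hdist : distFun (T f) (M₁ * μ) ≤ ENNReal.ofReal (M₀ * t) := by
    calc distFun (T f) (M₁*μ)
        ≤ mLeb (Function.support (T g)) + mLeb {x | M₁*μ < |T h x|} :=
          le_trans (measure_mono hsub) (measure_union_le _ _)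
      _ = norm0 (T g) := by rw [hnull, add_zero]; rfl
      _ ≤ ENNReal.ofReal M₀ * norm0 g := hT0 g hgL0
      _ ≤ ENNReal.ofReal M₀ * ENNReal.ofReal t := by gcongr
      _ = ENNReal.ofReal (M₀ * t) := (ENNReal.ofReal_mul hM₀.le).symm
  exact csInf_le ⟨0, fun s hs => hs.1⟩ ⟨by positivity, hdist⟩
end

section
/- Let T be an additive map sending measurable functions on (0,∞) to measurable functions, with constants M₀, M₁ > 0 such that ‖Tf‖₀ ≤ M₀‖f‖₀ for every f ∈ L₀(0,∞) and ‖Tf‖∞ ≤ M₁‖f‖∞ for every f ∈ L∞(0,∞). Then there exists a constant C > 0, depending only on M₀ and M₁, such that ‖Tf‖_S ≤ C‖f‖_S for every f ∈ S(0,∞), where ‖f‖_S = inf_{s>0}[s + d_f(s)]. In particular, T maps S(0,∞) boundedly into itself. -/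
open MeasureTheory Filter Set
open scoped ENNReal NNReal

/-- An additive map bounded on the pair `(L₀, L∞)` with constants
`M₀, M₁` is bounded on `(S(0,∞), ‖·‖_S)`, with a constant depending only on `M₀, M₁`. -/
theorem stmt7 (M₀ M₁ : ℝ) (hM₀ : 0 < M₀) (hM₁ : 0 < M₁) :
    ∃ C > (0:ℝ), ∀ T : (ℝ → ℝ) → (ℝ → ℝ),
      (∀ f g : ℝ → ℝ, T (f + g) = T f + T g) →
      (∀ f : ℝ → ℝ, Measurable f → Measurable (T f)) →
      (∀ f : ℝ → ℝ, MemL0 f → norm0 (T f) ≤ ENNReal.ofReal M₀ * norm0 f) →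
      (∀ f : ℝ → ℝ, MemLinf f → normInf (T f) ≤ ENNReal.ofReal M₁ * normInf f) →
      ∀ f : ℝ → ℝ, MemS f → normS (T f) ≤ ENNReal.ofReal C * normS f := by
  refine ⟨max M₀ M₁, lt_max_of_lt_left hM₀, ?_⟩
  intro T hadd hmeas hT0 hTinf f hf
  set C := max M₀ M₁ with hCdef
  have hCpos : 0 < C := lt_max_of_lt_left hM₀
  have key : ∀ s : ℝ, 0 < s →
      normS (T f) ≤ ENNReal.ofReal C * (ENNReal.ofReal s + distFun f s) := by
    intro s hs
    by_cases hfin : distFun f s < ⊤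
    · set A := {t : ℝ | s < |f t|} with hA
      have hAmeas : MeasurableSet A := measurableSet_lt measurable_const hf.1.abs
      set g := A.indicator f with hg
      set h := f - g with hh
      have hgmeas : Measurable g := hf.1.indicator hAmeas
      have hhmeas : Measurable h := hf.1.sub hgmeas
      have hsupp : mLeb (Function.support g) ≤ distFun f s :=
        measure_mono Set.support_indicator_subset
      have hgL0 : MemL0 g := ⟨hgmeas, lt_of_le_of_lt hsupp hfin⟩
      have hbound : ∀ t, |h t| ≤ s := by
        intro t
        by_cases ht : t ∈ A
        · simp [hh, hg, Set.indicator_of_mem ht, hs.le]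
        · simp only [hh, hg, Pi.sub_apply, Set.indicator_of_notMem ht, sub_zero]
          exact le_of_not_gt ht
      have hhinf : normInf h ≤ ENNReal.ofReal s := by
        rw [normInf, eLpNorm_exponent_top]
        exact eLpNormEssSup_le_of_ae_bound (Filter.Eventually.of_forall
          (fun t => (Real.norm_eq_abs _).trans_le (hbound t)))
      have hhLinf : MemLinf h := ⟨hhmeas, lt_of_le_of_lt hhinf ENNReal.ofReal_lt_top⟩
      have hsplit : f = g + h := by funext t; simp [hh]
      have hTsplit : T f = T g + T h := by rw [hsplit, hadd]
      have hTh : normInf (T h) ≤ ENNReal.ofReal (M₁ * s) := by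
        calc normInf (T h) ≤ ENNReal.ofReal M₁ * normInf h := hTinf h hhLinf
          _ ≤ ENNReal.ofReal M₁ * ENNReal.ofReal s := by gcongr
          _ = ENNReal.ofReal (M₁ * s) := (ENNReal.ofReal_mul hM₁.le).symm
      have hnull : mLeb {t | M₁ * s < |T h t|} = 0 := by
        have hae : ∀ᵐ t ∂mLeb, ¬ (M₁ * s < |T h t|) := by
          filter_upwards [ae_le_eLpNormEssSup (f := T h) (μ := mLeb)] with t ht
          rw [not_lt, ← Real.norm_eq_abs]
          have h1 : ENNReal.ofReal ‖T h t‖ ≤ ENNReal.ofReal (M₁ * s) := by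
            rw [ofReal_norm]
            refine ht.trans ?_
            rwa [normInf, eLpNorm_exponent_top] at hTh
          exact (ENNReal.ofReal_le_ofReal_iff (mul_nonneg hM₁.le hs.le)).mp h1
        have := hae
        rw [MeasureTheory.ae_iff] at this
        simpa using this
      have hsub : {t | M₁ * s < |T f t|} ⊆
          Function.support (T g) ∪ {t | M₁ * s < |T h t|} := by
        intro t ht
        by_cases hgt : T g t = 0
        · right
          have : T f t = T h t := by rw [hTsplit]; simp [hgt]
          simpa [Set.mem_setOf_eq, ← this] using ht
        · left; exact hgt
      have hd : distFun (T f) (M₁ * s) ≤ ENNReal.ofReal M₀ * distFun f s := by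
        calc distFun (T f) (M₁ * s)
            ≤ mLeb (Function.support (T g)) + mLeb {t | M₁ * s < |T h t|} :=
              (measure_mono hsub).trans (measure_union_le _ _)
          _ = norm0 (T g) := by rw [hnull, add_zero]; rfl
          _ ≤ ENNReal.ofReal M₀ * norm0 g := hT0 g hgL0
          _ ≤ ENNReal.ofReal M₀ * distFun f s := mul_le_mul_right hsupp _
      calc normS (T f) ≤ ENNReal.ofReal (M₁ * s) + distFun (T f) (M₁ * s) :=
            iInf₂_le (M₁ * s) (mul_pos hM₁ hs)
        _ ≤ ENNReal.ofReal (M₁ * s) + ENNReal.ofReal M₀ * distFun f s := by gcongr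
        _ ≤ ENNReal.ofReal C * ENNReal.ofReal s + ENNReal.ofReal C * distFun f s := by
            rw [ENNReal.ofReal_mul hM₁.le]
            gcongr
            · exact le_max_right _ _
            · exact le_max_left _ _
        _ = ENNReal.ofReal C * (ENNReal.ofReal s + distFun f s) := (mul_add _ _ _).symm
    · have h0 : distFun f s = ⊤ := top_le_iff.mp (not_lt.mp hfin)
      rw [h0, add_top, ENNReal.mul_top (ENNReal.ofReal_pos.mpr hCpos).ne']
      exact le_top
  calc normS (T f) ≤ ⨅ (s : ℝ) (_ : 0 < s),
        ENNReal.ofReal C * (ENNReal.ofReal s + distFun f s) := le_iInf₂ key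
    _ = ENNReal.ofReal C * normS f := by
        rw [normS, ENNReal.mul_iInf_of_ne (ENNReal.ofReal_pos.mpr hCpos).ne'
          ENNReal.ofReal_ne_top]
        refine iInf_congr fun s => ?_
        rw [ENNReal.mul_iInf_of_ne (ENNReal.ofReal_pos.mpr hCpos).ne'
          ENNReal.ofReal_ne_top]
end

section
/- Let a ∈ S(0,∞) and let x belong to the orbit of a for the pair (L₀(0,∞), L∞(0,∞)), i.e. x = Ta for some additive map T on measurable functions which is bounded from L₀ to L₀ and from L∞ to L∞. Let c = ‖x‖_orb be the infimum, over all such T with Ta = x, of max(‖T‖_{L₀→L₀}, ‖T‖_{L∞→L∞}), and assume c > 0. Then for every t > 0, μ(t; x) ≤ c·μ(t/c; a). -/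
open MeasureTheory Filter Set
open scoped ENNReal NNReal

/-- `T` is an additive map, mapping measurable functions to measurable functions,
whose `L₀ → L₀` and `L∞ → L∞` norms are both bounded by `r`. -/
def IsBoundedBy (T : (ℝ → ℝ) → (ℝ → ℝ)) (r : ℝ) : Prop :=
  (∀ f g : ℝ → ℝ, T (f + g) = T f + T g) ∧
  (∀ f : ℝ → ℝ, Measurable f → Measurable (T f)) ∧
  (∀ f : ℝ → ℝ, MemL0 f → norm0 (T f) ≤ ENNReal.ofReal r * norm0 f) ∧
  (∀ f : ℝ → ℝ, MemLinf f → normInf (T f) ≤ ENNReal.ofReal r * normInf f)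


private lemma distFun_anti_s8 (f : ℝ → ℝ) {s₁ s₂ : ℝ} (h : s₁ ≤ s₂) :
    distFun f s₂ ≤ distFun f s₁ :=
  measure_mono fun τ hτ => lt_of_le_of_lt h hτ

private lemma key_lemma (a x : ℝ → ℝ) (ha : Measurable a)
    (T : (ℝ → ℝ) → (ℝ → ℝ)) (r : ℝ) (hr : 0 ≤ r)
    (hT : IsBoundedBy T r) (hTa : T a = x)
    (s : ℝ) (hs : 0 ≤ s) (hfin : distFun a s < ⊤) :
    distFun x (r * s) ≤ ENNReal.ofReal r * distFun a s := by
  obtain ⟨hadd, hmeas, h0, hinf⟩ := hT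
  set g : ℝ → ℝ := fun τ => if s < |a τ| then a τ else 0 with hg
  set h : ℝ → ℝ := fun τ => if s < |a τ| then 0 else a τ with hh
  have hset : MeasurableSet {τ : ℝ | s < |a τ|} :=
    measurableSet_lt measurable_const ha.abs
  have hgmeas : Measurable g := Measurable.ite hset ha measurable_const
  have hhmeas : Measurable h := Measurable.ite hset measurable_const ha
  have hsupp : Function.support g ⊆ {τ | s < |a τ|} := by
    intro τ hτ
    by_contra hcon
    simp only [Set.mem_setOf_eq] at hcon
    exact hτ (by simp only [hg]; rw [if_neg hcon])
  have hnorm0g : norm0 g ≤ distFun a s := measure_mono hsupp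
  have hgL0 : MemL0 g := ⟨hgmeas, lt_of_le_of_lt hnorm0g hfin⟩
  have hhbound : ∀ τ, |h τ| ≤ s := by
    intro τ
    by_cases hτ : s < |a τ|
    · simp only [hh, if_pos hτ, abs_zero]; exact hs
    · simp only [hh, if_neg hτ]; exact le_of_not_gt hτ
  have hnormInfh : normInf h ≤ ENNReal.ofReal s := by
    have hb : ∀ᵐ τ ∂mLeb, ‖h τ‖ ≤ s :=
      Filter.Eventually.of_forall (fun τ => by rw [Real.norm_eq_abs]; exact hhbound τ)
    have := eLpNormEssSup_le_of_ae_bound (μ := mLeb) hb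
    rwa [normInf, eLpNorm_exponent_top]
  have hhLinf : MemLinf h := ⟨hhmeas, lt_of_le_of_lt hnormInfh ENNReal.ofReal_lt_top⟩
  have hagh : a = g + h := by
    funext τ
    by_cases hτ : s < |a τ| <;> simp [hg, hh, hτ]
  have hxgh : x = T g + T h := by rw [← hTa, hagh, hadd]
  have b1 : norm0 (T g) ≤ ENNReal.ofReal r * distFun a s :=
    (h0 g hgL0).trans (mul_le_mul_right hnorm0g _)
  have b2 : normInf (T h) ≤ ENNReal.ofReal (r * s) := by
    refine (hinf h hhLinf).trans ?_
    rw [ENNReal.ofReal_mul hr]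
    exact mul_le_mul_right hnormInfh _
  have hae : ∀ᵐ τ ∂mLeb, |T h τ| ≤ r * s := by
    have h1 := ae_le_eLpNormEssSup (f := T h) (μ := mLeb)
    rw [normInf, eLpNorm_exponent_top] at b2
    filter_upwards [h1] with τ hτ
    have h2 : (‖T h τ‖₊ : ℝ≥0∞) ≤ ENNReal.ofReal (r * s) := hτ.trans b2
    rw [← enorm_eq_nnnorm, Real.enorm_eq_ofReal_abs] at h2
    exact (ENNReal.ofReal_le_ofReal_iff (mul_nonneg hr hs)).1 h2
  have hN : mLeb {τ : ℝ | r * s < |T h τ|} = 0 := by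
    rw [ae_iff] at hae
    simpa only [not_le] using hae
  have hsub : {τ : ℝ | r * s < |x τ|} ⊆
      Function.support (T g) ∪ {τ : ℝ | r * s < |T h τ|} := by
    intro τ hτ
    by_cases hg0 : T g τ = 0
    · right
      have hxτ : x τ = T h τ := by rw [hxgh]; simp [hg0]
      simp only [Set.mem_setOf_eq] at hτ ⊢
      rwa [hxτ] at hτ
    · left; exact hg0
  calc distFun x (r * s)
      ≤ mLeb (Function.support (T g) ∪ {τ : ℝ | r * s < |T h τ|}) := measure_mono hsub
    _ ≤ mLeb (Function.support (T g)) + mLeb {τ : ℝ | r * s < |T h τ|} :=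
        measure_union_le _ _
    _ = norm0 (T g) := by rw [hN, add_zero]; rfl
    _ ≤ ENNReal.ofReal r * distFun a s := b1

private lemma exists_small (a : ℝ → ℝ) (ha : MemS a) (u : ℝ) (hu : 0 < u) :
    ∃ s : ℝ, 0 ≤ s ∧ distFun a s ≤ ENNReal.ofReal u := by
  obtain ⟨hmeas, s₀, hs₀, hfin⟩ := ha
  have hA : ∀ n : ℕ, NullMeasurableSet {τ : ℝ | s₀ + n < |a τ|} mLeb :=
    fun n => (measurableSet_lt measurable_const hmeas.abs).nullMeasurableSet
  have hanti : Antitone (fun n : ℕ => {τ : ℝ | s₀ + n < |a τ|}) := by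
    intro n m hnm τ hτ
    simp only [Set.mem_setOf_eq] at hτ ⊢
    have : (n : ℝ) ≤ m := Nat.cast_le.2 hnm
    linarith
  have hempty : ⋂ n : ℕ, {τ : ℝ | s₀ + n < |a τ|} = (∅ : Set ℝ) := by
    ext τ
    simp only [Set.mem_iInter, Set.mem_setOf_eq, Set.mem_empty_iff_false, iff_false]
    push_neg
    obtain ⟨n, hn⟩ := exists_nat_gt (|a τ| - s₀)
    exact ⟨n, by linarith⟩
  have hfin' : ∃ n : ℕ, mLeb {τ : ℝ | s₀ + n < |a τ|} ≠ ∞ :=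
    ⟨0, by simpa [distFun] using hfin.ne⟩
  have htend := tendsto_measure_iInter_atTop (μ := mLeb) hA hanti hfin'
  rw [hempty, measure_empty] at htend
  have hev : ∀ᶠ n : ℕ in Filter.atTop,
      (mLeb ∘ fun n : ℕ => {τ : ℝ | s₀ + n < |a τ|}) n < ENNReal.ofReal u :=
    htend.eventually_lt_const (ENNReal.ofReal_pos.2 hu)
  obtain ⟨n, hn⟩ := hev.exists
  exact ⟨s₀ + n, by positivity, le_of_lt hn⟩


/-- if `x` is in the orbit of `a` for `(L₀, L∞)` and
`c = ‖x‖_orb = inf {max(‖T‖_{L₀→L₀}, ‖T‖_{L∞→L∞}) : Ta = x} > 0`,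
then `μ(t; x) ≤ c·μ(t/c; a)` for every `t > 0`. -/
theorem stmt8 (a x : ℝ → ℝ) (ha : MemS a) (hx : MemS x)
    (hne : {r : ℝ | 0 ≤ r ∧ ∃ T : (ℝ → ℝ) → (ℝ → ℝ), IsBoundedBy T r ∧ T a = x}.Nonempty)
    (c : ℝ)
    (hc : c = sInf {r : ℝ | 0 ≤ r ∧ ∃ T : (ℝ → ℝ) → (ℝ → ℝ), IsBoundedBy T r ∧ T a = x})
    (hcpos : 0 < c) (t : ℝ) (ht : 0 < t) :
    rearr x t ≤ c * rearr a (t / c) := by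
  have hbdd : BddBelow {r : ℝ | 0 ≤ r ∧ ∃ T : (ℝ → ℝ) → (ℝ → ℝ), IsBoundedBy T r ∧ T a = x} :=
    ⟨0, fun r hr => hr.1⟩
  have huc : 0 < t / c := div_pos ht hcpos
  have hAne : {s : ℝ | 0 ≤ s ∧ distFun a s ≤ ENNReal.ofReal (t / c)}.Nonempty := by
    obtain ⟨s, hs1, hs2⟩ := exists_small a ha (t / c) huc
    exact ⟨s, hs1, hs2⟩
  have step : ∀ s : ℝ, 0 ≤ s → distFun a s ≤ ENNReal.ofReal (t / c) →
      rearr x t ≤ c * s := by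
    intro s hs0 hsd
    have star : ∀ s'' : ℝ, c * s < s'' → distFun x s'' ≤ ENNReal.ofReal t := by
      intro s'' hs''
      refine ENNReal.le_of_forall_pos_le_add (fun ε hε _ => ?_)
      set δ : ℝ := min ((ε : ℝ) * c / t) (if s = 0 then 1 else (s'' - c * s) / s) with hδ
      have hδpos : 0 < δ := by
        apply lt_min
        · positivity
        · by_cases hs : s = 0
          · rw [if_pos hs]; norm_num
          · rw [if_neg hs]
            have hspos : 0 < s := lt_of_le_of_ne hs0 (Ne.symm hs)
            exact div_pos (by linarith) hspos
      obtain ⟨r, hrS, hrδ⟩ := exists_lt_of_csInf_lt hne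
        (show sInf {r : ℝ | 0 ≤ r ∧ ∃ T : (ℝ → ℝ) → (ℝ → ℝ), IsBoundedBy T r ∧ T a = x} < c + δ by
          rw [← hc]; linarith)
      obtain ⟨hr0, T, hT, hTa⟩ := hrS
      have hrc : c ≤ r := by
        rw [hc]; exact csInf_le hbdd ⟨hr0, T, hT, hTa⟩
      have hrss : r * s ≤ s'' := by
        have hδs : δ * s ≤ s'' - c * s := by
          by_cases hs : s = 0
          · rw [hs] at hs'' ⊢; simp only [mul_zero, sub_zero]; linarith
          · have hspos : 0 < s := lt_of_le_of_ne hs0 (Ne.symm hs)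
            have h1 : δ ≤ (s'' - c * s) / s := by
              rw [hδ, if_neg hs]; exact min_le_right _ _
            calc δ * s ≤ ((s'' - c * s) / s) * s := mul_le_mul_of_nonneg_right h1 hs0
              _ = s'' - c * s := by field_simp
        calc r * s ≤ (c + δ) * s := mul_le_mul_of_nonneg_right hrδ.le hs0
          _ = c * s + δ * s := by ring
          _ ≤ s'' := by linarith
      have hfin : distFun a s < ⊤ := lt_of_le_of_lt hsd ENNReal.ofReal_lt_top
      have h2 := key_lemma a x ha.1 T r hr0 hT hTa s hs0 hfin
      have h3 : distFun x s'' ≤ ENNReal.ofReal (r * (t / c)) := by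
        rw [ENNReal.ofReal_mul hr0]
        exact (distFun_anti_s8 x hrss).trans (h2.trans (mul_le_mul_right hsd _))
      have h4 : r * (t / c) ≤ t + (ε : ℝ) := by
        have hδ1 : δ ≤ (ε : ℝ) * c / t :=
          min_le_left _ _
        have htc : 0 < t / c := huc
        calc r * (t / c) ≤ (c + δ) * (t / c) := mul_le_mul_of_nonneg_right hrδ.le htc.le
          _ = t + δ * (t / c) := by field_simp
          _ ≤ t + ((ε : ℝ) * c / t) * (t / c) := by
              have := mul_le_mul_of_nonneg_right hδ1 htc.le
              linarith
          _ = t + (ε : ℝ) := by field_simp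
      calc distFun x s'' ≤ ENNReal.ofReal (t + (ε : ℝ)) :=
            h3.trans (ENNReal.ofReal_le_ofReal h4)
        _ = ENNReal.ofReal t + ENNReal.ofReal (ε : ℝ) := ENNReal.ofReal_add ht.le ε.coe_nonneg
        _ = ENNReal.ofReal t + (ε : ℝ≥0∞) := by rw [ENNReal.ofReal_coe_nnreal]
    by_contra hcon
    push_neg at hcon
    set ε : ℝ := (rearr x t - c * s) / 2 with hε
    have hεpos : 0 < ε := by simp only [hε]; linarith
    have hmem : c * s + ε ∈ {s' : ℝ | 0 ≤ s' ∧ distFun x s' ≤ ENNReal.ofReal t} :=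
      ⟨by positivity, star (c * s + ε) (by linarith)⟩
    have := csInf_le (⟨0, fun s' hs' => hs'.1⟩ :
      BddBelow {s' : ℝ | 0 ≤ s' ∧ distFun x s' ≤ ENNReal.ofReal t}) hmem
    have : rearr x t ≤ c * s + ε := this
    simp only [hε] at this
    linarith
  have hlow : rearr x t / c ≤ rearr a (t / c) := by
    apply le_csInf hAne
    rintro s ⟨hs0, hsd⟩
    rw [div_le_iff₀ hcpos]
    have := step s hs0 hsd
    linarith [step s hs0 hsd]
  calc rearr x t = c * (rearr x t / c) := by field_simp
    _ ≤ c * rearr a (t / c) := mul_le_mul_of_nonneg_left hlow hcpos.le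
end

section
/- Let k₁ > 0 and τ > 0 and let x = k₁·χ_{(0,τ)} (the function equal to k₁ on (0,τ) and 0 elsewhere). Then for every u > 0, K_u(x) = min(u·k₁, τ). -/
open MeasureTheory Filter Set
open scoped ENNReal NNReal

lemma Kfun_le_s9 {u : ℝ} {f g h : ℝ → ℝ} (hg : MemL0 g) (hh : MemLinf h) (hfgh : f = g + h) :
    Kfun u f ≤ norm0 g + ENNReal.ofReal u * normInf h := by
  refine iInf_le_of_le g (iInf_le_of_le h ?_)
  exact iInf_le_of_le hg (iInf_le_of_le hh (iInf_le _ hfgh))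

/-- for `x = k₁·χ_{(0,τ)}` one has `K_u(x) = min(u·k₁, τ)` for every `u > 0`. -/
theorem stmt9 (k₁ τ : ℝ) (hk₁ : 0 < k₁) (hτ : 0 < τ) (u : ℝ) (hu : 0 < u) :
    Kfun u (Set.indicator (Set.Ioo (0:ℝ) τ) fun _ => k₁) =
      ENNReal.ofReal (min (u * k₁) τ) := by
  set x : ℝ → ℝ := Set.indicator (Set.Ioo (0:ℝ) τ) fun _ => k₁ with hxdef
  have hx_meas : Measurable x := measurable_const.indicator measurableSet_Ioo
  have hsupp : Function.support x = Set.Ioo 0 τ := by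
    rw [hxdef, Set.support_indicator]
    simp [Function.support_const hk₁.ne']
  have hmIoo : mLeb (Set.Ioo 0 τ) = ENNReal.ofReal τ := by
    rw [mLeb, Measure.restrict_apply measurableSet_Ioo]
    rw [Set.Ioo_inter_Ioi]
    simp [Real.volume_Ioo, max_eq_left (le_refl (0:ℝ))]
  have hnorm0x : norm0 x = ENNReal.ofReal τ := by rw [norm0, hsupp, hmIoo]
  have hbound : ∀ t, ‖x t‖ ≤ k₁ := by
    intro t
    rw [hxdef]
    by_cases ht : t ∈ Set.Ioo (0:ℝ) τ <;>
      simp [Set.indicator_of_mem, Set.indicator_of_notMem, ht, abs_of_pos hk₁, hk₁.le]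
  have hninfx : normInf x ≤ ENNReal.ofReal k₁ := by
    rw [normInf, eLpNorm_exponent_top]
    exact eLpNormEssSup_le_of_ae_bound (Eventually.of_forall hbound)
  refine le_antisymm ?_ ?_
  · -- upper bound
    rcases le_total (u * k₁) τ with hle | hle
    · rw [min_eq_left hle]
      have h1 : Kfun u x ≤ norm0 (fun _ => (0:ℝ)) + ENNReal.ofReal u * normInf x := by
        refine Kfun_le_s9 ⟨measurable_const, ?_⟩ ⟨hx_meas, lt_of_le_of_lt hninfx ENNReal.ofReal_lt_top⟩ ?_
        · simp [norm0, Function.support_zero]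
        · funext t; simp
      refine h1.trans ?_
      have : norm0 (fun _ => (0:ℝ)) = 0 := by simp [norm0, Function.support_zero]
      rw [this, zero_add, ENNReal.ofReal_mul hu.le]
      exact mul_le_mul_right hninfx _
    · rw [min_eq_right hle]
      have h1 : Kfun u x ≤ norm0 x + ENNReal.ofReal u * normInf (fun _ => (0:ℝ)) := by
        refine Kfun_le_s9 ⟨hx_meas, by rw [hnorm0x]; exact ENNReal.ofReal_lt_top⟩
          ⟨measurable_const, ?_⟩ ?_
        · rw [show normInf (fun _ => (0:ℝ)) = 0 from eLpNorm_zero']; exact ENNReal.zero_lt_top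
        · funext t; simp
      refine h1.trans ?_
      have : normInf (fun _ => (0:ℝ)) = 0 := eLpNorm_zero'
      rw [this, mul_zero, add_zero, hnorm0x]
  · -- lower bound
    rw [Kfun]
    refine le_iInf fun g => le_iInf fun h => le_iInf fun hg => le_iInf fun hh => le_iInf fun hfgh => ?_
    set A : Set ℝ := Set.Ioo 0 τ \ Function.support g with hA
    by_cases hA0 : mLeb A = 0
    · -- support of g covers a.e. all of Ioo 0 τ
      have hsub : Set.Ioo (0:ℝ) τ ⊆ Function.support g ∪ A := by
        intro t ht
        by_cases htg : t ∈ Function.support g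
        · exact Or.inl htg
        · exact Or.inr ⟨ht, htg⟩
      have : ENNReal.ofReal τ ≤ norm0 g := by
        calc ENNReal.ofReal τ = mLeb (Set.Ioo 0 τ) := hmIoo.symm
          _ ≤ mLeb (Function.support g ∪ A) := measure_mono hsub
          _ ≤ mLeb (Function.support g) + mLeb A := measure_union_le _ _
          _ = norm0 g := by rw [hA0, add_zero, norm0]
      calc ENNReal.ofReal (min (u * k₁) τ) ≤ ENNReal.ofReal τ :=
            ENNReal.ofReal_le_ofReal (min_le_right _ _)
        _ ≤ norm0 g := this
        _ ≤ _ := le_self_add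
    · -- on A, h = k₁, so normInf h ≥ k₁
      have hAk : ∀ t ∈ A, ‖h t‖₊ = ‖k₁‖₊ := by
        intro t ht
        have hgt : g t = 0 := by
          by_contra hne
          exact ht.2 hne
        have : x t = k₁ := by rw [hxdef]; exact Set.indicator_of_mem ht.1 _
        have hxt : g t + h t = k₁ := by rw [← this, hfgh]; rfl
        rw [hgt, zero_add] at hxt
        rw [hxt]
      have hk_le : ENNReal.ofReal k₁ ≤ normInf h := by
        by_contra hlt
        push_neg at hlt
        have hae : ∀ᵐ t ∂mLeb, (‖h t‖₊ : ℝ≥0∞) ≤ normInf h := by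
          rw [normInf, eLpNorm_exponent_top, eLpNormEssSup]
          exact ENNReal.ae_le_essSup _
        have : mLeb {t | ¬ ((‖h t‖₊ : ℝ≥0∞) ≤ normInf h)} = 0 := hae
        have hAsub : A ⊆ {t | ¬ ((‖h t‖₊ : ℝ≥0∞) ≤ normInf h)} := by
          intro t ht
          simp only [Set.mem_setOf_eq, not_le]
          rw [hAk t ht]
          calc normInf h < ENNReal.ofReal k₁ := hlt
            _ = (‖k₁‖₊ : ℝ≥0∞) := (Real.enorm_eq_ofReal hk₁.le).symm
        exact hA0 (measure_mono_null hAsub this)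
      calc ENNReal.ofReal (min (u * k₁) τ) ≤ ENNReal.ofReal (u * k₁) :=
            ENNReal.ofReal_le_ofReal (min_le_left _ _)
        _ = ENNReal.ofReal u * ENNReal.ofReal k₁ := ENNReal.ofReal_mul hu.le
        _ ≤ ENNReal.ofReal u * normInf h := mul_le_mul_right hk_le _
        _ ≤ _ := le_add_self
end

section
/- Let τ₁, τ₂ > 0 and let k₁ > k₂ > τ₂·k₁/(τ₁+τ₂) > 0. Let a = k₁·χ_{(0,τ₁)} + k₂·χ_{[τ₁, τ₁+τ₂)}. Then for every u > 0, K_u(a) = min(u·k₁, τ₁+τ₂). -/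
open MeasureTheory Filter Set
open scoped ENNReal NNReal

lemma ofReal_min' (x y : ℝ) :
    ENNReal.ofReal (min x y) = min (ENNReal.ofReal x) (ENNReal.ofReal y) := by
  rcases le_total x y with h | h
  · rw [min_eq_left h, min_eq_left (ENNReal.ofReal_le_ofReal h)]
  · rw [min_eq_right h, min_eq_right (ENNReal.ofReal_le_ofReal h)]

lemma mLeb_Ioo (b : ℝ) (hb : 0 ≤ b) : mLeb (Set.Ioo 0 b) = ENNReal.ofReal b := by
  rw [mLeb, Measure.restrict_apply measurableSet_Ioo, Set.Ioo_inter_Ioi,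
    Real.volume_Ioo]
  simp [max_eq_left, le_refl]


/-- for `a = k₁·χ_{(0,τ₁)} + k₂·χ_{[τ₁,τ₁+τ₂)}` with
`k₁ > k₂ > τ₂·k₁/(τ₁+τ₂) > 0`, one has `K_u(a) = min(u·k₁, τ₁+τ₂)` for every `u > 0`. -/
theorem stmt10 (τ₁ τ₂ k₁ k₂ : ℝ) (hτ₁ : 0 < τ₁) (hτ₂ : 0 < τ₂)
    (h₁ : k₂ < k₁) (h₂ : τ₂ * k₁ / (τ₁ + τ₂) < k₂) (h₃ : 0 < τ₂ * k₁ / (τ₁ + τ₂))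
    (u : ℝ) (hu : 0 < u) :
    Kfun u (Set.indicator (Set.Ioo (0:ℝ) τ₁) (fun _ => k₁) +
            Set.indicator (Set.Ico τ₁ (τ₁ + τ₂)) (fun _ => k₂)) =
      ENNReal.ofReal (min (u * k₁) (τ₁ + τ₂)) := by
  have hτ : 0 < τ₁ + τ₂ := by linarith
  have hk₁ : 0 < k₁ := by
    by_contra hk; push_neg at hk
    have h5 : τ₂ * k₁ ≤ 0 := mul_nonpos_of_nonneg_of_nonpos hτ₂.le hk
    have := div_nonpos_of_nonpos_of_nonneg h5 hτ.le
    linarith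
  have hk₂ : 0 < k₂ := lt_trans h₃ h₂
  have h₂' : τ₂ * k₁ < k₂ * (τ₁ + τ₂) := by
    rw [div_lt_iff₀ hτ] at h₂; linarith
  set a : ℝ → ℝ := Set.indicator (Set.Ioo (0:ℝ) τ₁) (fun _ => k₁) +
            Set.indicator (Set.Ico τ₁ (τ₁ + τ₂)) (fun _ => k₂) with ha
  have ha_meas : Measurable a :=
    (measurable_const.indicator measurableSet_Ioo).add
      (measurable_const.indicator measurableSet_Ico)
  have haval1 : ∀ t ∈ Set.Ioo (0:ℝ) τ₁, a t = k₁ := by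
    intro t ht
    have h2 : t ∉ Set.Ico τ₁ (τ₁ + τ₂) := by
      simp only [Set.mem_Ico, not_and, not_le]; intro h'; linarith [ht.2]
    simp only [ha, Pi.add_apply, Set.indicator_of_mem ht,
      Set.indicator_of_notMem h2, add_zero]
  have haval2 : ∀ t ∈ Set.Ico τ₁ (τ₁ + τ₂), a t = k₂ := by
    intro t ht
    have h2 : t ∉ Set.Ioo (0:ℝ) τ₁ := by
      simp only [Set.mem_Ioo, not_and, not_lt]; intro h'; linarith [ht.1]
    simp only [ha, Pi.add_apply, Set.indicator_of_mem ht,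
      Set.indicator_of_notMem h2, zero_add]
  have haval0 : ∀ t, t ∉ Set.Ioo (0:ℝ) (τ₁ + τ₂) → a t = 0 := by
    intro t htn
    have h1 : t ∉ Set.Ioo (0:ℝ) τ₁ := fun h => htn ⟨h.1, by linarith [h.2]⟩
    have h2 : t ∉ Set.Ico τ₁ (τ₁ + τ₂) := fun h => htn ⟨by linarith [h.1], h.2⟩
    simp [ha, Set.indicator_of_notMem h1, Set.indicator_of_notMem h2]
  have hsupp : Function.support a = Set.Ioo 0 (τ₁ + τ₂) := by
    ext t
    simp only [Function.mem_support]
    constructor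
    · intro hne
      by_contra htn
      exact hne (haval0 t htn)
    · intro ht
      rcases lt_or_ge t τ₁ with h | h
      · rw [haval1 t ⟨ht.1, h⟩]; exact ne_of_gt hk₁
      · rw [haval2 t ⟨h, ht.2⟩]; exact ne_of_gt hk₂
  have hbound : ∀ t, |a t| ≤ k₁ := by
    intro t
    by_cases ht1 : t ∈ Set.Ioo (0:ℝ) τ₁
    · rw [haval1 t ht1, abs_of_pos hk₁]
    · by_cases ht2 : t ∈ Set.Ico τ₁ (τ₁ + τ₂)
      · rw [haval2 t ht2, abs_of_pos hk₂]; linarith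
      · have h0 : a t = 0 := by
          simp [ha, Set.indicator_of_notMem ht1, Set.indicator_of_notMem ht2]
        rw [h0, abs_zero]; linarith
  have hnorm0a : norm0 a = ENNReal.ofReal (τ₁ + τ₂) := by
    rw [norm0, hsupp, mLeb_Ioo _ hτ.le]
  -- upper bound 1 : Kfun ≤ τ₁ + τ₂
  have hub1 : Kfun u a ≤ ENNReal.ofReal (τ₁ + τ₂) := by
    have memL0 : MemL0 a := ⟨ha_meas, by rw [hnorm0a]; exact ENNReal.ofReal_lt_top⟩
    have memLinf : MemLinf (0 : ℝ → ℝ) := ⟨measurable_const, by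
      simp [normInf, eLpNorm_zero]⟩
    calc Kfun u a ≤ norm0 a + ENNReal.ofReal u * normInf 0 := by
          refine iInf_le_of_le a (iInf_le_of_le 0 ?_)
          exact iInf_le_of_le memL0 (iInf_le_of_le memLinf (iInf_le _ (add_zero a).symm))
      _ = ENNReal.ofReal (τ₁ + τ₂) := by
          simp [hnorm0a, normInf, eLpNorm_zero]
  -- upper bound 2 : Kfun ≤ u * k₁
  have hnormInfa : normInf a ≤ ENNReal.ofReal k₁ := by
    rw [normInf, eLpNorm_exponent_top]
    exact eLpNormEssSup_le_of_ae_bound (C := k₁)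
      (Filter.Eventually.of_forall fun t => by rw [Real.norm_eq_abs]; exact hbound t)
  have hub2 : Kfun u a ≤ ENNReal.ofReal (u * k₁) := by
    have memL0 : MemL0 (0 : ℝ → ℝ) := ⟨measurable_const, by
      simp [norm0, Function.support_zero]⟩
    have memLinf : MemLinf a := ⟨ha_meas, lt_of_le_of_lt hnormInfa ENNReal.ofReal_lt_top⟩
    calc Kfun u a ≤ norm0 0 + ENNReal.ofReal u * normInf a := by
          refine iInf_le_of_le 0 (iInf_le_of_le a ?_)
          exact iInf_le_of_le memL0 (iInf_le_of_le memLinf (iInf_le _ (zero_add a).symm))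
      _ = ENNReal.ofReal u * normInf a := by
          rw [show norm0 (0 : ℝ → ℝ) = 0 from by simp [norm0], zero_add]
      _ ≤ ENNReal.ofReal u * ENNReal.ofReal k₁ := by gcongr
      _ = ENNReal.ofReal (u * k₁) := (ENNReal.ofReal_mul hu.le).symm
  refine le_antisymm ?_ ?_
  · rw [ofReal_min']
    exact le_min hub2 hub1
  -- lower bound
  refine le_iInf fun g => le_iInf fun h => le_iInf fun hg => le_iInf fun hh =>
    le_iInf fun heq => ?_
  set M : ℝ≥0∞ := normInf h with hM
  by_cases hMk₁ : ENNReal.ofReal k₁ ≤ M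
  · calc ENNReal.ofReal (min (u * k₁) (τ₁ + τ₂))
        ≤ ENNReal.ofReal (u * k₁) := ENNReal.ofReal_le_ofReal (min_le_left _ _)
      _ = ENNReal.ofReal u * ENNReal.ofReal k₁ := ENNReal.ofReal_mul hu.le
      _ ≤ ENNReal.ofReal u * M := by gcongr
      _ ≤ norm0 g + ENNReal.ofReal u * M := le_add_self
  push_neg at hMk₁
  have hae : ∀ᵐ t ∂mLeb, (‖h t‖₊ : ℝ≥0∞) ≤ M := by
    rw [hM, normInf, eLpNorm_exponent_top]
    exact enorm_ae_le_eLpNormEssSup h mLeb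
  have hbad : mLeb {t | ¬ ((‖h t‖₊ : ℝ≥0∞) ≤ M)} = 0 := by
    rw [← ae_iff]; exact hae
  -- on Ioo 0 τ₁, off supp g, |h| = k₁ > M
  have hsub1 : Set.Ioo (0:ℝ) τ₁ ⊆
      Function.support g ∪ {t | ¬ ((‖h t‖₊ : ℝ≥0∞) ≤ M)} := by
    intro t ht
    by_cases hgt : g t = 0
    · right
      have hht : h t = k₁ := by
        have := congrFun heq t
        simp only [Pi.add_apply] at this
        rw [haval1 t ht] at this
        linarith [this, hgt]
      simp only [Set.mem_setOf_eq, hht, ← enorm_eq_nnnorm, Real.enorm_eq_ofReal hk₁.le]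
      exact not_le.mpr hMk₁
    · exact Or.inl hgt
  have hbad_meas : mLeb (Function.support g ∪ {t | ¬ ((‖h t‖₊ : ℝ≥0∞) ≤ M)})
      ≤ norm0 g := by
    calc mLeb (Function.support g ∪ _) ≤ mLeb (Function.support g) +
          mLeb {t | ¬ ((‖h t‖₊ : ℝ≥0∞) ≤ M)} := measure_union_le _ _
      _ = norm0 g := by rw [hbad, add_zero]; rfl
  by_cases hMk₂ : ENNReal.ofReal k₂ ≤ M
  · -- norm0 g ≥ τ₁ and uM ≥ u k₂
    have hg1 : ENNReal.ofReal τ₁ ≤ norm0 g := by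
      calc ENNReal.ofReal τ₁ = mLeb (Set.Ioo 0 τ₁) := (mLeb_Ioo _ hτ₁.le).symm
        _ ≤ mLeb (Function.support g ∪ {t | ¬ ((‖h t‖₊ : ℝ≥0∞) ≤ M)}) :=
            measure_mono hsub1
        _ ≤ norm0 g := hbad_meas
    have hreal : min (u * k₁) (τ₁ + τ₂) ≤ τ₁ + u * k₂ := by
      rcases le_total (u * k₁) (τ₁ + τ₂) with hle | hlt
      · rw [min_eq_left hle]
        nlinarith [mul_le_mul_of_nonneg_right hle (sub_nonneg.2 h₁.le)]
      · rw [min_eq_right hlt]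
        nlinarith [mul_le_mul_of_nonneg_left hlt hk₂.le]
    calc ENNReal.ofReal (min (u * k₁) (τ₁ + τ₂))
        ≤ ENNReal.ofReal (τ₁ + u * k₂) := ENNReal.ofReal_le_ofReal hreal
      _ = ENNReal.ofReal τ₁ + ENNReal.ofReal u * ENNReal.ofReal k₂ := by
          rw [ENNReal.ofReal_add hτ₁.le (by positivity), ENNReal.ofReal_mul hu.le]
      _ ≤ norm0 g + ENNReal.ofReal u * M := by gcongr
  · -- norm0 g ≥ τ₁ + τ₂
    push_neg at hMk₂
    have hsub2 : Set.Ico τ₁ (τ₁ + τ₂) ⊆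
        Function.support g ∪ {t | ¬ ((‖h t‖₊ : ℝ≥0∞) ≤ M)} := by
      intro t ht
      by_cases hgt : g t = 0
      · right
        have hht : h t = k₂ := by
          have := congrFun heq t
          simp only [Pi.add_apply] at this
          rw [haval2 t ht] at this
          linarith [this, hgt]
        simp only [Set.mem_setOf_eq, hht, ← enorm_eq_nnnorm, Real.enorm_eq_ofReal hk₂.le]
        exact not_le.mpr hMk₂
      · exact Or.inl hgt
    have hg2 : ENNReal.ofReal (τ₁ + τ₂) ≤ norm0 g := by
      calc ENNReal.ofReal (τ₁ + τ₂) = mLeb (Set.Ioo 0 (τ₁ + τ₂)) :=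
            (mLeb_Ioo _ hτ.le).symm
        _ ≤ mLeb (Function.support g ∪ {t | ¬ ((‖h t‖₊ : ℝ≥0∞) ≤ M)}) := by
            refine measure_mono fun t ht => ?_
            rcases lt_or_ge t τ₁ with hcase | hcase
            · exact hsub1 ⟨ht.1, hcase⟩
            · exact hsub2 ⟨hcase, ht.2⟩
        _ ≤ norm0 g := hbad_meas
    calc ENNReal.ofReal (min (u * k₁) (τ₁ + τ₂))
        ≤ ENNReal.ofReal (τ₁ + τ₂) := ENNReal.ofReal_le_ofReal (min_le_right _ _)
      _ ≤ norm0 g := hg2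
      _ ≤ norm0 g + ENNReal.ofReal u * M := le_self_add
end

section
/- Let a, x ∈ S(0,∞) and C > 0. If K_u(x) ≤ C·K_u(a) for every u > 0, then μ(s; x) ≤ 3C·μ(s/(3C); a) for every s > 0. -/
open MeasureTheory Filter Set
open scoped ENNReal NNReal

lemma distFun_anti_s14 (f : ℝ → ℝ) {s t : ℝ} (hst : s ≤ t) : distFun f t ≤ distFun f s :=
  measure_mono fun _ hx => lt_of_le_of_lt hst hx

lemma kfun_le (a : ℝ → ℝ) (ham : Measurable a) {u τ : ℝ} (hu : 0 ≤ u) (hτ : 0 ≤ τ)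
    (hfin : distFun a τ < ⊤) :
    Kfun u a ≤ distFun a τ + ENNReal.ofReal u * ENNReal.ofReal τ := by
  set S : Set ℝ := {t | τ < |a t|} with hSdef
  have hSm : MeasurableSet S := measurableSet_lt measurable_const ham.abs
  set g : ℝ → ℝ := S.indicator a with hgdef
  set k : ℝ → ℝ := a - g with hkdef
  have hgm : Measurable g := ham.indicator hSm
  have hn0 : norm0 g ≤ distFun a τ := measure_mono (Set.support_indicator_subset)
  have hgL0 : MemL0 g := ⟨hgm, lt_of_le_of_lt hn0 hfin⟩
  have hkbd : ∀ t, ‖k t‖ ≤ τ := by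
    intro t
    by_cases ht : t ∈ S
    · simp [hkdef, hgdef, Set.indicator_of_mem ht, hτ]
    · have : |a t| ≤ τ := not_lt.mp ht
      simpa [hkdef, hgdef, Set.indicator_of_notMem ht, Real.norm_eq_abs] using this
  have hkinf : normInf k ≤ ENNReal.ofReal τ := by
    rw [normInf, eLpNorm_exponent_top]
    exact eLpNormEssSup_le_of_ae_bound (Filter.Eventually.of_forall hkbd)
  have hkLinf : MemLinf k := ⟨ham.sub hgm, lt_of_le_of_lt hkinf ENNReal.ofReal_lt_top⟩
  have heq : a = g + k := by funext t; simp [hkdef]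
  calc Kfun u a ≤ norm0 g + ENNReal.ofReal u * normInf k :=
        iInf_le_of_le g (iInf_le_of_le k (iInf_le_of_le hgL0 (iInf_le_of_le hkLinf
          (iInf_le _ heq))))
    _ ≤ distFun a τ + ENNReal.ofReal u * ENNReal.ofReal τ :=
        add_le_add hn0 (mul_le_mul_right hkinf _)

lemma min_le_kfun (x : ℝ → ℝ) {u r : ℝ} (hr : 0 < r) :
    min (distFun x r) (ENNReal.ofReal u * ENNReal.ofReal r) ≤ Kfun u x := by
  refine le_iInf fun g => le_iInf fun k => le_iInf fun hg => le_iInf fun hk =>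
    le_iInf fun hxe => ?_
  by_cases hcase : normInf k < ENNReal.ofReal r
  · refine le_trans (min_le_left _ _) ?_
    have hae : ∀ᵐ t ∂mLeb, |k t| < r := by
      have h1 : ∀ᵐ t ∂mLeb, (‖k t‖₊ : ℝ≥0∞) < ENNReal.ofReal r := by
        rw [normInf, eLpNorm_exponent_top, eLpNormEssSup] at hcase
        exact ae_lt_of_essSup_lt hcase
      filter_upwards [h1] with t ht
      rw [← enorm_eq_nnnorm, ← ofReal_norm, Real.norm_eq_abs] at ht
      exact (ENNReal.ofReal_lt_ofReal_iff hr).mp ht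
    have hnull : mLeb {t | ¬ |k t| < r} = 0 := by
      rw [← MeasureTheory.ae_iff]; exact hae
    have hsub : {t | r < |x t|} ⊆ Function.support g ∪ {t | ¬ |k t| < r} := by
      intro t ht
      by_cases hgt : g t = 0
      · right
        intro hlt
        have hxt : x t = k t := by rw [hxe]; simp [hgt]
        rw [Set.mem_setOf_eq, hxt] at ht
        exact absurd hlt (not_lt.mpr ht.le)
      · exact Or.inl hgt
    calc distFun x r ≤ mLeb (Function.support g ∪ {t | ¬ |k t| < r}) := measure_mono hsub
      _ ≤ norm0 g + mLeb {t | ¬ |k t| < r} := measure_union_le _ _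
      _ = norm0 g := by rw [hnull, add_zero]
      _ ≤ norm0 g + ENNReal.ofReal u * normInf k := le_self_add
  · refine le_trans (min_le_right _ _) ?_
    push_neg at hcase
    calc ENNReal.ofReal u * ENNReal.ofReal r ≤ ENNReal.ofReal u * normInf k :=
          mul_le_mul_right hcase _
      _ ≤ norm0 g + ENNReal.ofReal u * normInf k := le_add_self

lemma exists_distFun_le (a : ℝ → ℝ) (ha : MemS a) {δ : ℝ} (hδ : 0 < δ) :
    ∃ σ ≥ (0:ℝ), distFun a σ ≤ ENNReal.ofReal δ := by
  obtain ⟨ham, s₀, hs₀, hfin⟩ := ha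
  set S : ℕ → Set ℝ := fun n => {t | s₀ + n < |a t|} with hSdef
  have hmeas : ∀ n, MeasureTheory.NullMeasurableSet (S n) mLeb := fun n =>
    (measurableSet_lt measurable_const ham.abs).nullMeasurableSet
  have hanti : Antitone S := by
    intro m n hmn t ht
    have : s₀ + (m:ℝ) ≤ s₀ + n := by
      have := (Nat.cast_le (α := ℝ)).mpr hmn; linarith
    exact lt_of_le_of_lt this ht
  have hfin' : ∃ n, mLeb (S n) ≠ ⊤ := by
    refine ⟨0, ?_⟩
    have : mLeb (S 0) ≤ distFun a s₀ := by
      apply measure_mono; intro t ht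
      simp only [hSdef, Nat.cast_zero, add_zero, Set.mem_setOf_eq] at ht
      exact ht
    exact (lt_of_le_of_lt this hfin).ne
  have hInter : ⋂ n, S n = ∅ := by
    rw [Set.eq_empty_iff_forall_notMem]
    intro t ht
    obtain ⟨n, hn⟩ := exists_nat_ge (|a t| - s₀)
    have := Set.mem_iInter.mp ht n
    simp only [hSdef, Set.mem_setOf_eq] at this
    linarith
  have htend := MeasureTheory.tendsto_measure_iInter_atTop hmeas hanti hfin'
  rw [hInter, measure_empty] at htend
  have hev := htend.eventually_lt_const (ENNReal.ofReal_pos.mpr hδ)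
  obtain ⟨n, hn⟩ := hev.exists
  exact ⟨s₀ + n, by positivity, le_of_lt hn⟩

/-- if `K_u(x) ≤ C·K_u(a)` for every `u > 0`, then
`μ(s; x) ≤ 3C·μ(s/(3C); a)` for every `s > 0`. -/
theorem stmt14 (a x : ℝ → ℝ) (ha : MemS a) (hx : MemS x) (C : ℝ) (hC : 0 < C)
    (h : ∀ u > (0:ℝ), Kfun u x ≤ ENNReal.ofReal C * Kfun u a) :
    ∀ s > (0:ℝ), rearr x s ≤ (3 * C) * rearr a (s / (3 * C)) := by
  intro s hs
  have h3C : (0:ℝ) < 3 * C := by positivity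
  set δ := s / (3 * C) with hδdef
  have hδ : 0 < δ := div_pos hs h3C
  set A := {σ : ℝ | 0 ≤ σ ∧ distFun a σ ≤ ENNReal.ofReal δ} with hAdef
  obtain ⟨σ₀, hσ₀0, hσ₀⟩ := exists_distFun_le a ha hδ
  have hAne : A.Nonempty := ⟨σ₀, hσ₀0, hσ₀⟩
  set τ := rearr a δ with hτdef
  have hτ0 : 0 ≤ τ := Real.sInf_nonneg fun y hy => hy.1
  have key : ∀ ε > (0:ℝ), rearr x s ≤ 3 * C * τ + ε := by
    intro ε hε
    set ε' := ε / (3 * C) with hε'def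
    have hε' : 0 < ε' := div_pos hε h3C
    set τ' := τ + ε' with hτ'def
    have hττ' : τ < τ' := by simp [hτ'def]; linarith
    have hτ'0 : 0 < τ' := by linarith
    obtain ⟨σ, hσA, hσlt⟩ := exists_lt_of_csInf_lt hAne (show sInf A < τ' from hττ')
    have hdτ' : distFun a τ' ≤ ENNReal.ofReal δ :=
      le_trans (distFun_anti_s14 a hσlt.le) hσA.2
    set u := s / (3 * C * τ') with hudef
    have hu : 0 < u := div_pos hs (by positivity)
    have hKa : Kfun u a ≤ ENNReal.ofReal δ + ENNReal.ofReal u * ENNReal.ofReal τ' :=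
      le_trans (kfun_le a ha.1 hu.le hτ'0.le (lt_of_le_of_lt hdτ' ENNReal.ofReal_lt_top))
        (add_le_add_left hdτ' _)
    have huτ' : u * τ' = δ := by
      rw [hudef, hδdef, div_mul_eq_mul_div, mul_div_mul_right _ _ hτ'0.ne']
    have hur : u * (3 * C * τ') = s := by
      rw [hudef, div_mul_cancel₀ _ (by positivity)]
    have hKx : Kfun u x ≤ ENNReal.ofReal (2 * δ * C) := by
      refine le_trans (h u hu) ?_
      calc ENNReal.ofReal C * Kfun u a
          ≤ ENNReal.ofReal C * (ENNReal.ofReal δ + ENNReal.ofReal u * ENNReal.ofReal τ') :=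
            mul_le_mul_right hKa _
        _ = ENNReal.ofReal (2 * δ * C) := by
            rw [← ENNReal.ofReal_mul hu.le, huτ', ← ENNReal.ofReal_add hδ.le hδ.le,
              ← ENNReal.ofReal_mul hC.le]
            congr 1; ring
    have hmin := min_le_kfun x (u := u) (r := 3 * C * τ') (by positivity)
    rw [← ENNReal.ofReal_mul hu.le, hur] at hmin
    have hmin2 : min (distFun x (3 * C * τ')) (ENNReal.ofReal s) ≤ ENNReal.ofReal (2 * δ * C) :=
      le_trans hmin hKx
    have h2δC : 2 * δ * C < s := by
      have heq : 2 * δ * C = 2 * s / 3 := by rw [hδdef]; field_simp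
      rw [heq]; linarith
    have hdx : distFun x (3 * C * τ') ≤ ENNReal.ofReal s := by
      rcases min_le_iff.mp hmin2 with h1 | h1
      · exact le_trans h1 (ENNReal.ofReal_le_ofReal h2δC.le)
      · exact absurd h1 (not_le.mpr ((ENNReal.ofReal_lt_ofReal_iff hs).mpr h2δC))
    have hmem : 3 * C * τ' ∈ {σ : ℝ | 0 ≤ σ ∧ distFun x σ ≤ ENNReal.ofReal s} :=
      ⟨by positivity, hdx⟩
    have hle : rearr x s ≤ 3 * C * τ' :=
      csInf_le ⟨0, fun y hy => hy.1⟩ hmem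
    have : 3 * C * τ' = 3 * C * τ + ε := by
      rw [hτ'def, hε'def]; field_simp
    linarith
  by_contra hcon
  push_neg at hcon
  have h1 := key ((rearr x s - 3 * C * τ) / 2) (by linarith)
  linarith
end
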